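/- arXiv:1411.6732 — 11 statements merged into one kernel-verified Lean document; each statement's English description precedes it below -/
import Mathlib

section
/- Let G be a finite group and S a symmetric generating set of G. If φ is a colour-preserving automorphism of the connected Cayley graph Cay(G;S) fixing the identity element e, then the order of φ is a power of 2. -/
/-- A map `φ` is colour-preserving for the Cayley graph `Cay(G;S)` if it sends each
edge `x — xs` (coloured `{s,s⁻¹}`) to an edge of the same colour. -/
def ColourPreserving {G : Type*} [Group G] (S : Set G) (φ : G → G) : Prop :=
  ∀ x : G, ∀ s ∈ S, φ (x * s) = φ x * s ∨ φ (x * s) = φ x * s⁻¹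

/-- A map `φ` is colour-permuting for `Cay(G;S)` if it permutes the edge colours:
there is a permutation `π` of `S` with `π (s⁻¹) = (π s)⁻¹` and
`φ(xs) ∈ {φ(x) π(s)^{±1}}`. -/
def ColourPermuting {G : Type*} [Group G] (S : Set G) (φ : G → G) : Prop :=
  ∃ π : G → G, Set.BijOn π S S ∧ (∀ s ∈ S, π s⁻¹ = (π s)⁻¹) ∧
    ∀ x : G, ∀ s ∈ S, φ (x * s) = φ x * π s ∨ φ (x * s) = φ x * (π s)⁻¹

/-- `φ : G → G` is affine if it is a group automorphism composed with a left translation. -/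
def IsAffineMap {G : Type*} [Group G] (φ : G → G) : Prop :=
  ∃ (α : G ≃* G) (g : G), ∀ x, φ x = α (g * x)

/-- `G` is CCA if every colour-preserving automorphism of every connected Cayley graph
on `G` is affine. -/
def IsCCA (G : Type*) [Group G] : Prop :=
  ∀ S : Set G, S⁻¹ = S → Subgroup.closure S = ⊤ →
    ∀ φ : Equiv.Perm G, ColourPreserving S ⇑φ → IsAffineMap ⇑φ

/-- `G` is strongly CCA if every colour-permuting automorphism of every connected
Cayley graph on `G` is affine. -/
def IsStronglyCCA (G : Type*) [Group G] : Prop :=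
  ∀ S : Set G, S⁻¹ = S → Subgroup.closure S = ⊤ →
    ∀ φ : Equiv.Perm G, ColourPermuting S ⇑φ → IsAffineMap ⇑φ

section Aux
variable {G : Type*} [Group G] {S : Set G}

lemma cp_comp (hS : S⁻¹ = S) {φ ψ : G → G} (hφ : ColourPreserving S φ)
    (hψ : ColourPreserving S ψ) : ColourPreserving S (fun x => φ (ψ x)) := by
  intro x s hs
  have hs' : s⁻¹ ∈ S := by rw [← hS]; exact Set.inv_mem_inv.mpr hs
  rcases hψ x s hs with h | h <;> simp only [h]
  · exact hφ (ψ x) s hs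
  · rcases hφ (ψ x) s⁻¹ hs' with h2 | h2
    · right; exact h2
    · left; rwa [inv_inv] at h2

lemma cp_pow (hS : S⁻¹ = S) (φ : Equiv.Perm G) (hφ : ColourPreserving S ⇑φ) :
    ∀ n : ℕ, ColourPreserving S ⇑(φ ^ n) := by
  intro n; induction n with
  | zero => intro x s hs; left; simp
  | succ n ih =>
      have := cp_comp hS ih hφ
      intro x s hs
      simpa [pow_succ, Equiv.Perm.mul_apply] using this x s hs

lemma step_fix (hS : S⁻¹ = S) (ψ : Equiv.Perm G) (hcp : ColourPreserving S ⇑ψ)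
    {m : ℕ} (hm : Odd m) (hψm : ψ ^ m = 1) {x : G} (hx : ψ x = x)
    {s : G} (hs : s ∈ S) : ψ (x * s) = x * s := by
  have hs' : s⁻¹ ∈ S := by rw [← hS]; exact Set.inv_mem_inv.mpr hs
  rcases hcp x s hs with h1 | h1
  · rw [h1, hx]
  rw [hx] at h1
  by_cases hab : x * s = x * s⁻¹
  · rw [h1, ← hab]
  · have h2 : ψ (x * s⁻¹) = x * s := by
      rcases hcp x s⁻¹ hs' with h2 | h2 <;> rw [hx] at h2
      · exact absurd (ψ.injective (h1.trans h2.symm)) hab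
      · rwa [inv_inv] at h2
    have hsq : ∀ k : ℕ, (ψ ^ (2 * k)) (x * s) = x * s := by
      intro k; induction k with
      | zero => simp
      | succ k ih =>
          have h2k : 2 * (k + 1) = (2 * k + 1) + 1 := by ring
          rw [h2k, pow_succ, pow_succ, Equiv.Perm.mul_apply, Equiv.Perm.mul_apply,
            h1, h2, ih]
    obtain ⟨k, hk⟩ := hm
    have : (ψ ^ m) (x * s) = x * s⁻¹ := by
      rw [hk, pow_succ', Equiv.Perm.mul_apply, hsq k, h1]
    rw [hψm] at this
    simp only [Equiv.Perm.one_apply] at this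
    exact absurd this hab

lemma odd_order_eq_one (hS : S⁻¹ = S) (hgen : Subgroup.closure S = ⊤)
    (ψ : Equiv.Perm G) (hcp : ColourPreserving S ⇑ψ) (hfix : ψ 1 = 1)
    {m : ℕ} (hm : Odd m) (hψm : ψ ^ m = 1) : ψ = 1 := by
  have key : ∀ (l : List G), (∀ y ∈ l, y ∈ S) → ∀ x : G, ψ x = x →
      ψ (x * l.prod) = x * l.prod := by
    intro l
    induction l with
    | nil => intro _ x hx; simpa using hx
    | cons s l ih =>
        intro hl x hx
        have hs : s ∈ S := hl s List.mem_cons_self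
        have hl' : ∀ y ∈ l, y ∈ S := fun y hy => hl y (List.mem_cons_of_mem _ hy)
        have := ih hl' (x * s) (step_fix hS ψ hcp hm hψm hx hs)
        simpa [List.prod_cons, mul_assoc] using this
  ext g
  have hg : g ∈ Submonoid.closure S := by
    have h1 : (Subgroup.closure S).toSubmonoid = Submonoid.closure (S ∪ S⁻¹) :=
      Subgroup.closure_toSubmonoid S
    have h2 : S ∪ S⁻¹ = S := by rw [hS]; exact Set.union_self S
    have : g ∈ (Subgroup.closure S).toSubmonoid := by
      rw [hgen]; trivial
    rwa [h1, h2] at this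
  obtain ⟨l, hl, rfl⟩ := Submonoid.exists_list_of_mem_closure hg
  have := key l hl 1 hfix
  simpa using this

end Aux

/-- A colour-preserving automorphism of a connected Cayley graph fixing the identity
has order a power of `2`. -/
theorem stmt_3 {G : Type*} [Group G] [Finite G] (S : Set G) (hS : S⁻¹ = S)
    (hgen : Subgroup.closure S = ⊤) (φ : Equiv.Perm G)
    (hφ : ColourPreserving S ⇑φ) (hfix : φ 1 = 1) :
    ∃ k : ℕ, orderOf φ = 2 ^ k := by
  set n := orderOf φ with hn
  have hnpos : 0 < n := orderOf_pos φ
  set k := n.factorization 2 with hk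
  set m := n / 2 ^ k with hmdef
  have hodd : Odd m := by
    have h2 : ¬ 2 ∣ m := Nat.not_dvd_ordCompl Nat.prime_two hnpos.ne'
    exact Nat.odd_iff.mpr (Nat.two_dvd_ne_zero.mp h2)
  have hfixpow : ∀ j : ℕ, (φ ^ j) 1 = 1 := by
    intro j; induction j with
    | zero => simp
    | succ j ih => rw [pow_succ, Equiv.Perm.mul_apply, hfix, ih]
  have hpow1 : (φ ^ 2 ^ k) ^ m = 1 := by
    rw [← pow_mul]
    have : 2 ^ k * m = n := Nat.ordProj_mul_ordCompl_eq_self n 2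
    rw [this, hn, pow_orderOf_eq_one]
  have := odd_order_eq_one hS hgen (φ ^ 2 ^ k) (cp_pow hS φ hφ _) (hfixpow _)
    hodd hpow1
  have hdvd : n ∣ 2 ^ k := orderOf_dvd_of_pow_eq_one this
  obtain ⟨j, _, hj⟩ := (Nat.dvd_prime_pow Nat.prime_two).mp hdvd
  exact ⟨j, hj⟩
end

section
/- The stabilizer of the identity in the group of all colour-preserving automorphisms of a connected Cayley graph Cay(G;S) on a finite group G is a 2-group. -/
/-- The stabilizer of the identity in the group of colour-preserving automorphisms of a
connected Cayley graph is a `2`-group: each of its elements has `2`-power order. -/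
theorem stmt_4 {G : Type*} [Group G] [Finite G] (S : Set G) (hS : S⁻¹ = S)
    (hgen : Subgroup.closure S = ⊤) :
    ∀ φ : Equiv.Perm G, ColourPreserving S ⇑φ → φ 1 = 1 → ∃ k : ℕ, φ ^ (2 ^ k) = 1 := by
  intro φ hcp h1
  have hinv : ∀ s ∈ S, s⁻¹ ∈ S := by
    intro s hs; rw [← hS]; simpa using hs
  -- composition of colour-preserving maps is colour-preserving
  have hcomp : ∀ f g : G → G, ColourPreserving S f → ColourPreserving S g →
      ColourPreserving S (f ∘ g) := by
    intro f g hf hg x s hs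
    rcases hg x s hs with h | h <;> simp only [Function.comp_apply, h]
    · exact hf (g x) s hs
    · rcases hf (g x) s⁻¹ (hinv s hs) with h' | h' <;> rw [h']
      · right; rfl
      · left; rw [inv_inv]
  -- powers of φ are colour-preserving
  have hpow : ∀ n : ℕ, ColourPreserving S ⇑(φ ^ n) := by
    intro n
    induction n with
    | zero => intro x s hs; left; simp
    | succ n ih =>
      have h : ⇑(φ ^ (n + 1)) = ⇑(φ ^ n) ∘ ⇑φ := by
        rw [pow_succ]; rfl
      rw [h]; exact hcomp _ _ ih hcp
  -- key step: if ψ colour-preserving fixes x and s ∈ S, then ψ² fixes x*s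
  have key : ∀ ψ : Equiv.Perm G, ColourPreserving S ⇑ψ → ∀ x, ψ x = x →
      ∀ s ∈ S, ψ (ψ (x * s)) = x * s := by
    intro ψ hψ x hx s hs
    rcases hψ x s hs with h | h
    · rw [h, hx, h, hx]
    · rw [h, hx]
      rcases hψ x s⁻¹ (hinv s hs) with h' | h' <;> rw [hx] at h'
      · have heq : x * s = x * s⁻¹ := ψ.injective (by rw [h, hx, h'])
        rw [h', ← heq]
      · rw [inv_inv] at h'; exact h'
  -- doubling and monotonicity
  have double : ∀ k : ℕ, ∀ x : G, (φ ^ 2 ^ k) x = x → (φ ^ 2 ^ (k + 1)) x = x := by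
    intro k x hx
    have h : φ ^ 2 ^ (k + 1) = φ ^ 2 ^ k * φ ^ 2 ^ k := by
      rw [← pow_add, pow_succ, mul_two]
    rw [h, Equiv.Perm.mul_apply, hx, hx]
  have mono : ∀ k m : ℕ, k ≤ m → ∀ x : G, (φ ^ 2 ^ k) x = x → (φ ^ 2 ^ m) x = x := by
    intro k m hkm
    induction m, hkm using Nat.le_induction with
    | base => exact fun x hx => hx
    | succ m hm ih => exact fun x hx => double m x (ih x hx)
  -- every element is eventually fixed
  have main : ∀ g : G, ∃ k : ℕ, (φ ^ 2 ^ k) g = g := by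
    have hmem : ∀ g : G, g ∈ Submonoid.closure S := by
      intro g
      have h2 : (Subgroup.closure S).toSubmonoid = Submonoid.closure (S ∪ S⁻¹) :=
        Subgroup.closure_toSubmonoid S
      have h3 : Submonoid.closure (S ∪ S⁻¹) = Submonoid.closure S := by
        rw [hS, Set.union_self]
      have : g ∈ (Subgroup.closure S).toSubmonoid := by
        rw [hgen]; trivial
      rwa [h2, h3] at this
    intro g
    have step : ∀ g ∈ Submonoid.closure S,
        ∀ x : G, (∃ k, (φ ^ 2 ^ k) x = x) → ∃ k, (φ ^ 2 ^ k) (x * g) = x * g := by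
      intro g hg
      induction hg using Submonoid.closure_induction with
      | mem s hs =>
        intro x ⟨k, hk⟩
        refine ⟨k + 1, ?_⟩
        have h : φ ^ 2 ^ (k + 1) = φ ^ 2 ^ k * φ ^ 2 ^ k := by
          rw [← pow_add, pow_succ, mul_two]
        rw [h, Equiv.Perm.mul_apply]
        exact key (φ ^ 2 ^ k) (hpow _) x hk s hs
      | one => intro x hx; simpa using hx
      | mul a b _ _ iha ihb =>
        intro x hx
        have := ihb (x * a) (iha x hx)
        simpa [mul_assoc] using this
    have h0 : ∃ k, (φ ^ 2 ^ 0) (1 : G) = 1 := ⟨0, by simpa using h1⟩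
    simpa using step g (hmem g) 1 ⟨0, by simpa using h1⟩
  -- finish via finiteness
  have : ∃ K : ℕ, ∀ g : G, (φ ^ 2 ^ K) g = g := by
    haveI := Fintype.ofFinite G
    choose f hf using main
    refine ⟨Finset.univ.sup f, fun g => ?_⟩
    exact mono (f g) _ (Finset.le_sup (Finset.mem_univ g)) g (hf g)
  obtain ⟨K, hK⟩ := this
  exact ⟨K, Equiv.ext fun g => hK g⟩
end

section
/- The quaternion group Q₈ is not CCA: the Cayley graph Cay(Q₈; {±i, ±j}) admits a colour-preserving automorphism fixing the identity that is not a group automorphism of Q₈. Concretely, the permutation interchanging k and −k and fixing all other elements is a colour-preserving automorphism of this Cayley graph but not an automorphism of Q₈. -/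
set_option linter.unreachableTactic false
set_option linter.unusedTactic false

/-- `Q₈` is not CCA: swapping `k` and `−k = k⁻¹` (fixing everything else) is a
colour-preserving automorphism of `Cay(Q₈; {±i, ±j})` fixing the identity that is not a
group automorphism. -/
theorem stmt_5 :
    let i : QuaternionGroup 2 := QuaternionGroup.a 1
    let j : QuaternionGroup 2 := QuaternionGroup.xa 0
    let k : QuaternionGroup 2 := i * j
    let S : Set (QuaternionGroup 2) := {i, i⁻¹, j, j⁻¹}
    let φ : Equiv.Perm (QuaternionGroup 2) := Equiv.swap k k⁻¹
    ColourPreserving S ⇑φ ∧ φ 1 = 1 ∧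
      (¬ ∃ α : QuaternionGroup 2 ≃* QuaternionGroup 2, ⇑φ = ⇑α) ∧
      ¬ IsCCA (QuaternionGroup 2) := by
  intro i j k S φ
  have hcp : ColourPreserving S ⇑φ := by
    intro x s hs
    fin_cases x <;> simp only [S, Set.mem_insert_iff, Set.mem_singleton_iff] at hs <;>
      rcases hs with h|h|h|h <;> subst h <;> simp [φ, i, j, k, Equiv.swap_apply_def] <;> decide
  have hone : φ 1 = 1 := by simp [φ, Equiv.swap_apply_def]; decide
  have hnot : ¬ ∃ α : QuaternionGroup 2 ≃* QuaternionGroup 2, ⇑φ = ⇑α := by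
    rintro ⟨α, hα⟩
    have h1 : φ (i * j) = φ i * φ j := by rw [hα]; exact map_mul α i j
    have h2 : φ i = i := by simp [φ, Equiv.swap_apply_def, i, j, k]; decide
    have h3 : φ j = j := by simp [φ, Equiv.swap_apply_def, i, j, k]; decide
    have h4 : φ (i * j) = k⁻¹ := by
      show Equiv.swap k k⁻¹ k = k⁻¹
      exact Equiv.swap_apply_left k k⁻¹
    rw [h4, h2, h3] at h1
    exact absurd h1 (by decide)
  refine ⟨hcp, hone, hnot, ?_⟩
  intro hcca
  have hSinv : S⁻¹ = S := by
    ext x; simp only [Set.mem_inv, S, Set.mem_insert_iff, Set.mem_singleton_iff]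
    fin_cases x <;> decide
  have hclos : Subgroup.closure S = ⊤ := by
    rw [eq_top_iff]
    intro x _
    have hi : i ∈ Subgroup.closure S := Subgroup.subset_closure (by left; rfl)
    have hj : j ∈ Subgroup.closure S := Subgroup.subset_closure (by right; right; left; rfl)
    fin_cases x
    · exact one_mem _
    · exact hi
    · have := mul_mem hi hi; convert this using 1 <;> decide
    · have := mul_mem (mul_mem hi hi) hi; convert this using 1 <;> decide
    · exact hj
    · have := mul_mem (mul_mem (mul_mem hi hi) hi) hj; convert this using 1 <;> decide
    · have := mul_mem (mul_mem hi hi) hj; convert this using 1 <;> decide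
    · have := mul_mem hi hj; convert this using 1 <;> decide
  obtain ⟨α, g, hg⟩ := hcca S hSinv hclos φ hcp
  have hg1 : α g = 1 := by have h := hg 1; rw [mul_one, hone] at h; exact h.symm
  have : g = 1 := by
    have := α.injective (a₂ := 1) (by rw [hg1, map_one])
    exact this
  subst this
  exact hnot ⟨α, by funext x; rw [hg x, one_mul]⟩
end

section
/- The group ℤ₄ × ℤ₂ is not CCA: the permutation of ℤ₄ × ℤ₂ that interchanges (0,1) and (2,1) and fixes all other elements is a colour-preserving automorphism of Cay(ℤ₄×ℤ₂; {±(1,0), ±(1,1)}) that fixes the identity but is not a group automorphism. -/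
/-- Colour-preserving map for the Cayley graph of an additive group. -/
def ColourPreservingAdd {G : Type*} [AddGroup G] (S : Set G) (φ : G → G) : Prop :=
  ∀ x : G, ∀ s ∈ S, φ (x + s) = φ x + s ∨ φ (x + s) = φ x - s

/-- Affine map on an additive group: an automorphism composed with a translation. -/
def IsAffineAddMap {G : Type*} [AddGroup G] (φ : G → G) : Prop :=
  ∃ (α : G ≃+ G) (g : G), ∀ x, φ x = α (g + x)

/-- CCA property for additive groups. -/
def IsCCAAdd (G : Type*) [AddGroup G] : Prop :=
  ∀ S : Set G, -S = S → AddSubgroup.closure S = ⊤ →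
    ∀ φ : Equiv.Perm G, ColourPreservingAdd S ⇑φ → IsAffineAddMap ⇑φ

/-- `ℤ₄ × ℤ₂` is not CCA: swapping `(0,1)` and `(2,1)` (fixing everything else) is a
colour-preserving automorphism of `Cay(ℤ₄×ℤ₂; {±(1,0), ±(1,1)})` fixing the identity
that is not a group automorphism. -/
theorem stmt_6 :
    let S : Set (ZMod 4 × ZMod 2) := {(1,0), (3,0), (1,1), (3,1)}
    let φ : Equiv.Perm (ZMod 4 × ZMod 2) := Equiv.swap (0,1) (2,1)
    ColourPreservingAdd S ⇑φ ∧ φ 0 = 0 ∧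
      (¬ ∃ α : (ZMod 4 × ZMod 2) ≃+ (ZMod 4 × ZMod 2), ⇑φ = ⇑α) ∧
      ¬ IsCCAAdd (ZMod 4 × ZMod 2) := by
  intro S φ
  have hcp : ColourPreservingAdd S ⇑φ := by
    intro x s hs
    simp only [S, Set.mem_insert_iff, Set.mem_singleton_iff] at hs
    rcases hs with rfl|rfl|rfl|rfl <;> revert x <;> decide
  have hfix : φ 0 = 0 := by decide
  have hna : ¬ ∃ α : (ZMod 4 × ZMod 2) ≃+ (ZMod 4 × ZMod 2), ⇑φ = ⇑α := by
    rintro ⟨α, hα⟩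
    have h1 : φ ((0,1) + (1,0)) = φ (0,1) + φ (1,0) := by
      rw [hα]; exact map_add α _ _
    revert h1; decide
  refine ⟨hcp, hfix, hna, ?_⟩
  intro hcca
  have hsym : -S = S := by
    ext x; simp only [Set.mem_neg]; revert x; decide
  have hclos : AddSubgroup.closure S = ⊤ := by
    rw [eq_top_iff]
    rintro ⟨a, b⟩ -
    have h10 : ((1:ZMod 4), (0:ZMod 2)) ∈ AddSubgroup.closure S :=
      AddSubgroup.subset_closure (by left; rfl)
    have h11 : ((1:ZMod 4), (1:ZMod 2)) ∈ AddSubgroup.closure S :=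
      AddSubgroup.subset_closure (by right; right; left; rfl)
    have h01 : ((0:ZMod 4), (1:ZMod 2)) ∈ AddSubgroup.closure S := by
      have := AddSubgroup.sub_mem _ h11 h10
      simpa using this
    have : (a, b) = a.val • ((1:ZMod 4), (0:ZMod 2)) + b.val • ((0:ZMod 4), (1:ZMod 2)) := by
      revert a b; decide
    rw [this]
    exact AddSubgroup.add_mem _ (AddSubgroup.nsmul_mem _ h10 _) (AddSubgroup.nsmul_mem _ h01 _)
  obtain ⟨α, g, hg⟩ := hcca S hsym hclos φ hcp
  have hg0 : g = 0 := by
    have := hg 0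
    rw [hfix, add_zero] at this
    exact α.injective (by simpa using this.symm)
  exact hna ⟨α, funext fun x => by rw [hg x, hg0, zero_add]⟩
end

section
/- Suppose a finite group G has a symmetric generating set S, an involution τ ∈ G, and a subset T ⊆ S such that: each element of S is either centralized or inverted by τ; t² = τ for all t ∈ T; the subgroup H = ⟨(S∖T) ∪ {τ}⟩ is proper in G; and either |G:H| > 2 or τ is not central in G. Then G is not CCA. -/
open Classical in
noncomputable def auxPhi {G : Type*} [Group G] (H : Subgroup G) (τ : G) (x : G) : G :=
  if x ∈ H then x else x * τ


/-- Proposition 2.6 (notCCA-structure): the existence of a symmetric generating set `S`,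
an involution `τ` centralizing or inverting each element of `S`, and a subset `T ⊆ S`
of square roots of `τ` with `⟨(S∖T) ∪ {τ}⟩` proper (and of index `> 2`, or `τ`
non-central) implies `G` is not CCA. -/
theorem stmt_7 {G : Type*} [Group G] (S T : Set G) (τ : G) [Finite G]
    (hS : S⁻¹ = S) (hgen : Subgroup.closure S = ⊤)
    (hτ : τ ^ 2 = 1) (hτ1 : τ ≠ 1)
    (hcent : ∀ s ∈ S, τ * s * τ⁻¹ = s ∨ τ * s * τ⁻¹ = s⁻¹)
    (hTS : T ⊆ S) (hT : ∀ t ∈ T, t ^ 2 = τ)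
    (hH : Subgroup.closure ((S \ T) ∪ {τ}) ≠ ⊤)
    (hlast : 2 < (Subgroup.closure ((S \ T) ∪ {τ})).index ∨ τ ∉ Subgroup.center G) :
    ¬ IsCCA G := by
  classical
  intro hcca
  set H := Subgroup.closure ((S \ T) ∪ {τ}) with hHdef
  have hτH : τ ∈ H := Subgroup.subset_closure (Or.inr rfl)
  have hSH : ∀ s ∈ S, s ∉ T → s ∈ H := fun s hs hns =>
    Subgroup.subset_closure (Or.inl ⟨hs, hns⟩)
  have hττ : τ * τ = 1 := by rw [← sq]; exact hτ
  have hτinv : τ⁻¹ = τ := inv_eq_of_mul_eq_one_right hττ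
  have hmemτ : ∀ x : G, x ∉ H → x * τ ∉ H := by
    intro x hx h
    exact hx (by simpa [mul_assoc, hττ] using H.mul_mem h hτH)
  have hinv : Function.Involutive (auxPhi H τ) := by
    intro x
    by_cases hx : x ∈ H
    · simp [auxPhi, hx]
    · simp [auxPhi, hx, hmemτ x hx, mul_assoc, hττ]
  set φ := hinv.toPerm with hφdef
  have hφ : ∀ x, φ x = if x ∈ H then x else x * τ := fun x => rfl
  -- colour preserving
  have hcp : ColourPreserving S ⇑φ := by
    intro x s hs
    by_cases hx : x ∈ H <;> by_cases hxs : x * s ∈ H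
    · left; simp [hφ, hx, hxs]
    · -- x ∈ H, x*s ∉ H : s ∈ T
      have hsH : s ∉ H := fun h => hxs (H.mul_mem hx h)
      have hsT : s ∈ T := by by_contra hns; exact hsH (hSH s hs hns)
      have hss : s * s = τ := by rw [← sq]; exact hT s hsT
      have h1 : s * τ * s = 1 := by
        rw [← hss, show s * (s * s) * s = s * s * (s * s) by group, hss, hττ]
      have hsτ : s * τ = s⁻¹ := eq_inv_of_mul_eq_one_left h1
      right
      simp only [hφ, if_pos hx, if_neg hxs]
      rw [mul_assoc, hsτ]
    · -- x ∉ H, x*s ∈ H : s ∈ T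
      have hsH : s ∉ H := fun h =>
        hx (by simpa [mul_assoc] using H.mul_mem hxs (H.inv_mem h))
      have hsT : s ∈ T := by by_contra hns; exact hsH (hSH s hs hns)
      have hss : s * s = τ := by rw [← sq]; exact hT s hsT
      right
      simp only [hφ, if_pos hxs, if_neg hx]
      rw [mul_assoc, ← hss, mul_assoc, mul_inv_cancel, mul_one]
    · -- x ∉ H, x*s ∉ H : use centralize/invert
      rcases hcent s hs with hc | hc
      · left
        have hcomm : s * τ = τ * s := by
          have h2 : τ * s = τ * s * τ⁻¹ * τ := by group
          rw [h2, hc]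
        simp only [hφ, if_neg hx, if_neg hxs]
        rw [mul_assoc, mul_assoc, hcomm]
      · right
        have hcomm : s * τ = τ * s⁻¹ := by
          have h2 : τ * s⁻¹ = τ * (τ * s * τ⁻¹) := by rw [hc]
          rw [h2, hτinv, ← mul_assoc, ← mul_assoc, hττ, one_mul]
        simp only [hφ, if_neg hx, if_neg hxs]
        rw [mul_assoc, mul_assoc, hcomm]
  -- φ is not affine
  have hna : ¬ IsAffineMap ⇑φ := by
    rintro ⟨α, g, hag⟩
    have h1 : φ (1 : G) = 1 := by simp [hφ, H.one_mem]
    have hg : g = 1 := by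
      have h2 := hag 1
      rw [mul_one, h1] at h2
      exact α.injective (by rw [map_one]; exact h2.symm)
    have hmul : ∀ x y : G, φ (x * y) = φ x * φ y := by
      intro x y
      rw [hag, hag, hag, hg, one_mul, one_mul, one_mul, map_mul]
    obtain ⟨x, hx⟩ : ∃ x : G, x ∉ H := by
      by_contra h
      push_neg at h
      exact hH ((Subgroup.eq_top_iff' H).mpr h)
    rcases hlast with hidx | hcen
    · -- index > 2 case
      obtain ⟨c, hc1, hcx⟩ : ∃ c : G ⧸ H,
          c ≠ QuotientGroup.mk 1 ∧ c ≠ QuotientGroup.mk x := by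
        by_contra h
        push_neg at h
        have hsurj : Function.Surjective
            (fun b : Bool => if b then QuotientGroup.mk x else QuotientGroup.mk (1:G) :
              Bool → G ⧸ H) := by
          intro c
          by_cases h1 : c = QuotientGroup.mk (1:G)
          · exact ⟨false, h1.symm⟩
          · exact ⟨true, (h c h1).symm⟩
        have hle : H.index ≤ 2 := by
          rw [Subgroup.index_eq_card]
          have := Nat.card_le_card_of_surjective _ hsurj
          simpa using this
        omega
      obtain ⟨z, rfl⟩ := QuotientGroup.mk_surjective c
      have hz : z ∉ H := fun h =>
        hc1 ((QuotientGroup.eq (s := H)).mpr (by simpa using H.inv_mem h))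
      have hw : x⁻¹ * z ∉ H := by
        intro h
        apply hcx
        exact ((QuotientGroup.eq (s := H)).mpr h).symm
      have hxw : x * (x⁻¹ * z) ∉ H := by
        rwa [show x * (x⁻¹ * z) = z by group]
      have E := hmul x (x⁻¹ * z)
      simp only [hφ, if_neg hx, if_neg hw, if_neg hxw] at E
      -- E : (x * (x⁻¹*z)) * τ = (x * τ) * ((x⁻¹*z) * τ)
      apply hτ1
      have E2 : x⁻¹ * z * τ = τ * (x⁻¹ * z * τ) := by
        apply mul_left_cancel (a := x)
        rw [← mul_assoc x (x⁻¹ * z) τ, ← mul_assoc x τ (x⁻¹ * z * τ)]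
        exact E
      rw [← mul_assoc] at E2
      have E4 := mul_right_cancel E2
      exact right_eq_mul.mp E4
    · -- τ not central case
      apply hcen
      rw [Subgroup.mem_center_iff]
      intro g
      by_cases hgH : g ∈ H
      · have hxg : x * g ∉ H := fun h =>
          hx (by simpa [mul_assoc] using H.mul_mem h (H.inv_mem hgH))
        have E := hmul x g
        simp only [hφ, if_neg hx, if_pos hgH, if_neg hxg] at E
        -- E : x * g * τ = x * τ * g
        rw [mul_assoc, mul_assoc] at E
        exact mul_left_cancel E
      · by_cases hgg : g * g ∈ H
        · have E := hmul g g
          simp only [hφ, if_neg hgH, if_pos hgg] at E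
          -- E : g * g = g * τ * (g * τ)
          rw [mul_assoc] at E
          have E2 := mul_left_cancel E
          -- E2 : g = τ * (g * τ)
          calc g * τ = τ * (g * τ) * τ := by rw [← E2]
            _ = τ * g * (τ * τ) := by group
            _ = τ * g := by rw [hττ, mul_one]
        · exfalso
          apply hτ1
          have E := hmul g g
          simp only [hφ, if_neg hgH, if_neg hgg] at E
          -- E : g * g * τ = g * τ * (g * τ)
          have E2 : g * (g * τ) = g * (τ * (g * τ)) := by
            rw [← mul_assoc g g τ, ← mul_assoc g τ (g * τ)]
            exact E
          have E3 := mul_left_cancel E2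
          rw [← mul_assoc] at E3
          have E4 := mul_right_cancel E3
          exact right_eq_mul.mp E4
  exact hna (hcca S hS hgen φ hcp)
end

section
/- For integers m ≥ 3 and n ≥ 2, the wreath product ℤ_m ≀ ℤ_n = (ℤ_m)ⁿ ⋊ ℤ_n (with ℤ_n cyclically permuting coordinates) is not CCA. Specifically, with generators a = ((1,0,…,0),0) and b = ((0,…,0),1), the map ((x₁,x₂,…,x_n),y) ↦ ((−x₁,x₂,…,x_n),y) is a colour-preserving automorphism of Cay(ℤ_m ≀ ℤ_n; {a^{±1}, b^{±1}}) that fixes the identity but is not a group automorphism. -/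
/-- The wreath product `ℤ_m ≀ ℤ_n = (ℤ_m)^n ⋊ ℤ_n`, with `ℤ_n` cyclically permuting
the coordinates (indexed by `ℤ_n`). -/
def Wr (m n : ℕ) : Type := (ZMod n → ZMod m) × ZMod n

instance (m n : ℕ) : Group (Wr m n) where
  mul p q := (p.1 + fun i => q.1 (i - p.2), p.2 + q.2)
  one := (0, 0)
  inv p := (fun i => -p.1 (i + p.2), -p.2)
  mul_assoc p q r := by
    refine Prod.ext ?_ (add_assoc _ _ _)
    funext i
    show p.1 i + q.1 (i - p.2) + r.1 (i - (p.2 + q.2)) =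
      p.1 i + (q.1 (i - p.2) + r.1 (i - p.2 - q.2))
    rw [sub_sub, add_assoc]
  one_mul p := by
    refine Prod.ext ?_ (zero_add _)
    funext i
    show 0 + p.1 (i - 0) = p.1 i
    rw [sub_zero, zero_add]
  mul_one p := by
    refine Prod.ext ?_ (add_zero _)
    funext i
    show p.1 i + 0 = p.1 i
    rw [add_zero]
  inv_mul_cancel p := by
    refine Prod.ext ?_ (neg_add_cancel _)
    funext i
    show -p.1 (i + p.2) + p.1 (i - -p.2) = 0
    rw [sub_neg_eq_add, neg_add_cancel]


section WrAux
variable {m n : ℕ}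

lemma Wr.mul_def (p q : Wr m n) :
    p * q = (p.1 + fun i => q.1 (i - p.2), p.2 + q.2) := rfl

lemma Wr.inv_def (p : Wr m n) :
    p⁻¹ = (fun i => -p.1 (i + p.2), -p.2) := rfl

lemma Wr.one_def : (1 : Wr m n) = (0, 0) := rfl

/-- Constructor for `Wr` whose result type is syntactically `Wr m n`. -/
def Wr.mk (f : ZMod n → ZMod m) (k : ZMod n) : Wr m n := (f, k)

end WrAux

/-- For `m ≥ 3`, `n ≥ 2`, the wreath product `ℤ_m ≀ ℤ_n` is not CCA: negating the
coordinate indexed by `0` is a colour-preserving automorphism of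
`Cay(ℤ_m ≀ ℤ_n; {a^{±1}, b^{±1}})` fixing the identity that is not a group
automorphism. -/
theorem stmt_9 (m n : ℕ) (hm : 3 ≤ m) (hn : 2 ≤ n) :
    let a : Wr m n := (fun i => if i = 0 then 1 else 0, 0)
    let b : Wr m n := (0, 1)
    let S : Set (Wr m n) := {a, a⁻¹, b, b⁻¹}
    let ψ : Wr m n → Wr m n := fun p => (fun i => if i = 0 then -p.1 i else p.1 i, p.2)
    Function.Bijective ψ ∧ ColourPreserving S ψ ∧ ψ 1 = 1 ∧
      (¬ ∃ α : Wr m n ≃* Wr m n, ψ = ⇑α) ∧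
      ¬ IsCCA (Wr m n) := by
  intro a b S ψ
  haveI : NeZero n := ⟨by omega⟩
  haveI : NeZero m := ⟨by omega⟩
  haveI : Fact (1 < n) := ⟨by omega⟩
  haveI : Fact (1 < m) := ⟨by omega⟩
  -- ψ is an involution
  have hinv : Function.Involutive ψ := by
    intro p
    refine Prod.ext ?_ rfl
    funext i
    show (if i = 0 then -(if i = 0 then -p.1 i else p.1 i) else
      (if i = 0 then -p.1 i else p.1 i)) = p.1 i
    split_ifs <;> simp
  have hbij : Function.Bijective ψ := hinv.bijective
  -- ψ fixes the identity
  have hone : ψ 1 = 1 := by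
    refine Prod.ext ?_ rfl
    funext i
    show (if i = 0 then -(0 : ZMod m) else 0) = 0
    split_ifs <;> simp
  -- colour preserving
  have hcp : ColourPreserving S ψ := by
    intro x s hs
    obtain rfl | rfl | rfl | rfl := hs
    · -- s = a
      by_cases hk : x.2 = 0
      · right
        refine Prod.ext ?_ (show x.2 + 0 = x.2 + -0 by simp)
        funext i
        show (if i = 0 then -(x.1 i + (if i - x.2 = 0 then (1 : ZMod m) else 0))
            else x.1 i + (if i - x.2 = 0 then (1 : ZMod m) else 0)) =
          (if i = 0 then -x.1 i else x.1 i) +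
            -(if i - x.2 + 0 = 0 then (1 : ZMod m) else 0)
        simp only [hk, sub_zero, add_zero]
        split_ifs with h <;> ring
      · left
        refine Prod.ext ?_ rfl
        funext i
        show (if i = 0 then -(x.1 i + (if i - x.2 = 0 then (1 : ZMod m) else 0))
            else x.1 i + (if i - x.2 = 0 then (1 : ZMod m) else 0)) =
          (if i = 0 then -x.1 i else x.1 i) + (if i - x.2 = 0 then (1 : ZMod m) else 0)
        simp only [sub_eq_zero]
        split_ifs with h1 h2
        · exact absurd (h1.symm.trans h2).symm hk
        · ring
        · ring
        · ring
    · -- s = a⁻¹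
      by_cases hk : x.2 = 0
      · right
        rw [inv_inv]
        refine Prod.ext ?_ (show x.2 + -0 = x.2 + 0 by simp)
        funext i
        show (if i = 0 then -(x.1 i + -(if i - x.2 + 0 = 0 then (1 : ZMod m) else 0))
            else x.1 i + -(if i - x.2 + 0 = 0 then (1 : ZMod m) else 0)) =
          (if i = 0 then -x.1 i else x.1 i) + (if i - x.2 = 0 then (1 : ZMod m) else 0)
        simp only [hk, sub_zero, add_zero, neg_zero]
        split_ifs with h <;> ring
      · left
        refine Prod.ext ?_ rfl
        funext i
        show (if i = 0 then -(x.1 i + -(if i - x.2 + 0 = 0 then (1 : ZMod m) else 0))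
            else x.1 i + -(if i - x.2 + 0 = 0 then (1 : ZMod m) else 0)) =
          (if i = 0 then -x.1 i else x.1 i) + -(if i - x.2 + 0 = 0 then (1 : ZMod m) else 0)
        simp only [add_zero, sub_eq_zero]
        split_ifs with h1 h2
        · exact absurd (h1.symm.trans h2).symm hk
        · ring
        · ring
        · ring
    · -- s = b
      left
      refine Prod.ext ?_ rfl
      funext i
      show (if i = 0 then -(x.1 i + (0 : ZMod n → ZMod m) (i - x.2))
          else x.1 i + (0 : ZMod n → ZMod m) (i - x.2)) =
        (if i = 0 then -x.1 i else x.1 i) + (0 : ZMod n → ZMod m) (i - x.2)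
      simp
    · -- s = b⁻¹
      left
      refine Prod.ext ?_ rfl
      funext i
      show (if i = 0 then -(x.1 i + -(0 : ZMod n → ZMod m) (i - x.2 + 1))
          else x.1 i + -(0 : ZMod n → ZMod m) (i - x.2 + 1)) =
        (if i = 0 then -x.1 i else x.1 i) + -(0 : ZMod n → ZMod m) (i - x.2 + 1)
      simp
  -- not a group automorphism
  have hm2 : (-1 : ZMod m) ≠ 1 := by
    intro h
    have h2 : ((2 : ℕ) : ZMod m) = 0 := by push_cast; linear_combination -h
    rw [ZMod.natCast_eq_zero_iff] at h2
    have := Nat.le_of_dvd (by norm_num) h2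
    omega
  have hn1 : (-1 : ZMod n) ≠ 0 := by
    simp only [ne_eq, neg_eq_zero]
    exact one_ne_zero
  have hnotaut : ¬ ∃ α : Wr m n ≃* Wr m n, ψ = ⇑α := by
    rintro ⟨α, hα⟩
    set q : Wr m n := (fun i => if i = -1 then 1 else 0, 0) with hq
    have hmul : ψ (b * q) = ψ b * ψ q := by rw [hα]; exact map_mul α b q
    have h0 := congrFun (congrArg Prod.fst hmul) 0
    have hL : (ψ (b * q)).1 0 = -1 := by
      show (if (0 : ZMod n) = 0 then -((0 : ZMod n → ZMod m) 0 +
          (if (0 : ZMod n) - 1 = -1 then (1 : ZMod m) else 0)) else _) = -1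
      rw [if_pos rfl, if_pos (by ring)]
      simp
    have hR : (ψ b * ψ q).1 0 = 1 := by
      show ((if (0 : ZMod n) = 0 then -((0 : ZMod n → ZMod m) 0) else _) +
          (if (0 : ZMod n) - 1 = 0 then -(if (0 : ZMod n) - 1 = -1 then (1 : ZMod m) else 0)
            else (if (0 : ZMod n) - 1 = -1 then (1 : ZMod m) else 0))) = 1
      rw [if_pos rfl, if_neg (by rw [zero_sub]; exact hn1), if_pos (by ring)]
      simp
    rw [hL, hR] at h0
    exact hm2 h0
  -- generation
  have hgen : Subgroup.closure S = ⊤ := by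
    set H := Subgroup.closure S with hH
    have haH : a ∈ H := Subgroup.subset_closure (Or.inl rfl)
    have hbH : b ∈ H := Subgroup.subset_closure (Or.inr (Or.inr (Or.inl rfl)))
    have hzmul : ∀ (x y : ZMod n), Wr.mk (m := m) 0 x * Wr.mk 0 y = Wr.mk 0 (x + y) := by
      intro x y
      refine Prod.ext ?_ rfl
      funext i
      show (0 : ZMod m) + 0 = 0
      rw [add_zero]
    have hb' : b = Wr.mk 0 1 := rfl
    have hbn : ∀ j : ℕ, Wr.mk (m := m) 0 ((j : ZMod n)) ∈ H := by
      intro j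
      induction j with
      | zero =>
        have e : Wr.mk (m := m) 0 (((0 : ℕ) : ZMod n)) = 1 := by
          rw [Nat.cast_zero]; rfl
        rw [e]; exact H.one_mem
      | succ j ih =>
        have h2 := H.mul_mem ih hbH
        rw [hb', hzmul] at h2
        have e : ((j : ZMod n) + 1) = ((j + 1 : ℕ) : ZMod n) := by push_cast; ring
        rw [e] at h2
        exact h2
    have hzH : ∀ k : ZMod n, Wr.mk (m := m) 0 k ∈ H := by
      intro k
      obtain ⟨j, rfl⟩ := ZMod.natCast_zmod_surjective (n := n) k
      exact hbn j
    have hpow : ∀ t : ℕ, (a ^ t : Wr m n) =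
        Wr.mk (fun i => if i = 0 then ((t : ℕ) : ZMod m) else 0) 0 := by
      intro t
      induction t with
      | zero =>
        refine Prod.ext ?_ rfl
        funext i
        show (0 : ZMod m) = if i = 0 then ((0 : ℕ) : ZMod m) else 0
        rw [Nat.cast_zero]
        split_ifs <;> rfl
      | succ t ih =>
        rw [pow_succ, ih]
        refine Prod.ext ?_ (add_zero 0)
        funext i
        show (if i = 0 then ((t : ℕ) : ZMod m) else 0) +
            (if i - 0 = 0 then (1 : ZMod m) else 0) =
          (if i = 0 then ((t + 1 : ℕ) : ZMod m) else 0)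
        rw [sub_zero]
        push_cast
        split_ifs <;> ring
    have h0c : ∀ c : ZMod m, Wr.mk (fun i => if i = 0 then c else 0) 0 ∈ H := by
      intro c
      have hmem := H.pow_mem haH c.val
      rw [hpow c.val] at hmem
      have e : ((c.val : ℕ) : ZMod m) = c := ZMod.natCast_rightInverse c
      rw [e] at hmem
      exact hmem
    have heH : ∀ (j : ZMod n) (c : ZMod m),
        Wr.mk (fun i => if i = j then c else 0) 0 ∈ H := by
      intro j c
      have hconj : Wr.mk (m := m) 0 j * Wr.mk (fun i => if i = 0 then c else 0) 0 *
          Wr.mk 0 (-j) = Wr.mk (fun i => if i = j then c else 0) 0 := by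
        refine Prod.ext ?_ (show j + 0 + -j = 0 by ring)
        funext i
        show ((0 : ZMod m) + (if i - j = 0 then c else 0)) + (0 : ZMod m) =
          (if i = j then c else 0)
        simp only [zero_add, add_zero, sub_eq_zero]
      have hmem := H.mul_mem (H.mul_mem (hzH j) (h0c c)) (hzH (-j))
      rwa [hconj] at hmem
    have hmulf : ∀ (f g : ZMod n → ZMod m), Wr.mk f 0 * Wr.mk g 0 = Wr.mk (f + g) 0 := by
      intro f g
      refine Prod.ext ?_ (add_zero 0)
      funext i
      show f i + g (i - 0) = f i + g i
      rw [sub_zero]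
    classical
    have hf0 : ∀ f : ZMod n → ZMod m, Wr.mk f 0 ∈ H := by
      intro f
      have key : ∀ t : Finset (ZMod n),
          Wr.mk (fun i => if i ∈ t then f i else 0) 0 ∈ H := by
        intro t
        induction t using Finset.induction_on with
        | empty =>
          have e : Wr.mk (m := m) (fun i => if i ∈ (∅ : Finset (ZMod n)) then f i else 0) 0
              = 1 := by
            refine Prod.ext ?_ rfl
            funext i
            show (if i ∈ (∅ : Finset (ZMod n)) then f i else 0) = (0 : ZMod m)
            simp
          rw [e]; exact H.one_mem
        | @insert j s hj ih =>
          have e : (fun i => if i ∈ insert j s then f i else 0) =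
              (fun i => if i = j then f j else 0) + fun i => if i ∈ s then f i else 0 := by
            funext i
            by_cases h : i = j
            · subst h; simp [hj]
            · simp [h, Finset.mem_insert]
          have e2 : Wr.mk (m := m) (fun i => if i ∈ insert j s then f i else 0) 0 =
              Wr.mk (fun i => if i = j then f j else 0) 0 *
                Wr.mk (fun i => if i ∈ s then f i else 0) 0 := by
            rw [hmulf, ← e]
          rw [e2]
          exact H.mul_mem (heH j (f j)) ih
      have e3 : (fun i => if i ∈ (Finset.univ : Finset (ZMod n)) then f i else 0) = f := by
        funext i; simp
      have := key Finset.univ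
      rwa [e3] at this
    rw [eq_top_iff]
    rintro ⟨f, k⟩ -
    have e4 : ((⟨f, k⟩ : (ZMod n → ZMod m) × ZMod n) : Wr m n) = Wr.mk f 0 * Wr.mk 0 k := by
      refine Prod.ext ?_ (zero_add k).symm
      funext i
      show f i = f i + (0 : ZMod m)
      rw [add_zero]
    rw [e4]
    exact H.mul_mem (hf0 f) (hzH k)
  have hsymm : S⁻¹ = S := by
    ext x
    simp only [S, Set.mem_inv, Set.mem_insert_iff, Set.mem_singleton_iff]
    constructor
    · rintro (h | h | h | h)
      · exact Or.inr (Or.inl (inv_eq_iff_eq_inv.mp h))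
      · exact Or.inl (inv_injective (by rw [h]))
      · exact Or.inr (Or.inr (Or.inr (inv_eq_iff_eq_inv.mp h)))
      · exact Or.inr (Or.inr (Or.inl (inv_injective (by rw [h]))))
    · rintro (rfl | rfl | rfl | rfl)
      · exact Or.inr (Or.inl rfl)
      · exact Or.inl (inv_inv a)
      · exact Or.inr (Or.inr (Or.inr rfl))
      · exact Or.inr (Or.inr (Or.inl (inv_inv b)))
  refine ⟨hbij, hcp, hone, hnotaut, ?_⟩
  intro hcca
  obtain ⟨α, g, hαg⟩ := hcca S hsymm hgen hinv.toPerm hcp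
  have hg1 : α (g * 1) = 1 := by rw [← hαg]; exact hone
  have hg : g = 1 := by
    have := α.injective (by rw [hg1, map_one] : α (g * 1) = α 1)
    simpa using this
  exact hnotaut ⟨α, funext fun x => by rw [show ψ x = (hinv.toPerm : Equiv.Perm (Wr m n)) x from rfl, hαg x, hg, one_mul]⟩
end

section
/- If a finite group G₁ is not strongly CCA and G₂ is any finite group, then G₁ × G₂ is not strongly CCA. The same statement holds with 'CCA' in place of 'strongly CCA'. -/
open Subgroup Set

section helpers
variable {G₁ G₂ : Type*} [Group G₁] [Group G₂]

lemma affine_of_prodCongr (φ : Equiv.Perm G₁)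
    (h : IsAffineMap (⇑(Equiv.prodCongr φ (Equiv.refl G₂)))) : IsAffineMap ⇑φ := by
  obtain ⟨α, g, hα⟩ := h
  have key : ∀ v : G₁ × G₂, α v = ((φ 1 : G₁), (1:G₂))⁻¹ * (φ v.1, v.2) := by
    intro v
    have h1 : α (g * v) = (φ v.1, v.2) := by
      have := hα v
      simp only [Equiv.prodCongr_apply, Equiv.coe_refl, Prod.map] at this
      exact this.symm
    have h0 : α g = (φ 1, 1) := by
      have := hα 1
      simp [Equiv.prodCongr_apply] at this
      simpa [Prod.map] using this.symm
    calc α v = (α g)⁻¹ * α (g * v) := by rw [map_mul, inv_mul_cancel_left]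
    _ = _ := by rw [h0, h1]
  have hmul : ∀ x y : G₁, (φ 1)⁻¹ * φ (x * y) = ((φ 1)⁻¹ * φ x) * ((φ 1)⁻¹ * φ y) := by
    intro x y
    have hm := map_mul α (x, (1:G₂)) (y, (1:G₂))
    rw [key, key, key] at hm
    have := congrArg Prod.fst hm
    simpa [Prod.ext_iff] using this
  let e : G₁ ≃ G₁ := φ.trans (Equiv.mulLeft (φ 1)⁻¹)
  have he : ∀ x, e x = (φ 1)⁻¹ * φ x := fun x => rfl
  have hmul' : ∀ x y, e (x * y) = e x * e y := by
    intro x y; rw [he, he, he]; exact hmul x y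
  let β : G₁ ≃* G₁ := MulEquiv.mk' e hmul'
  refine ⟨β, e.symm (φ 1), fun x => ?_⟩
  have hβ : ∀ x, β x = (φ 1)⁻¹ * φ x := he
  have : β (e.symm (φ 1) * x) = β (e.symm (φ 1)) * β x := map_mul β _ _
  rw [this]
  have h2 : β (e.symm (φ 1)) = φ 1 := e.apply_symm_apply (φ 1)
  rw [h2, hβ, mul_inv_cancel_left]

lemma inv_prodSet (S : Set G₁) (hS : S⁻¹ = S) :
    ((S ×ˢ ({1}:Set G₂)) ∪ (({1}:Set G₁) ×ˢ (univ:Set G₂)))⁻¹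
      = (S ×ˢ ({1}:Set G₂)) ∪ (({1}:Set G₁) ×ˢ (univ:Set G₂)) := by
  ext ⟨a, b⟩
  have ha : a⁻¹ ∈ S ↔ a ∈ S := by
    constructor
    · intro h'; rw [← hS]; simpa using Set.inv_mem_inv.mpr h'
    · intro h'; rw [← hS] at h'; simpa using h'
  simp only [Set.mem_inv, Set.mem_union, Set.mem_prod, Set.mem_singleton_iff, Prod.fst_inv,
    Prod.snd_inv, inv_eq_one, Set.mem_univ, and_true, ha]

lemma closure_prodSet (S : Set G₁) (h : Subgroup.closure S = ⊤) :
    Subgroup.closure ((S ×ˢ ({1}:Set G₂)) ∪ (({1}:Set G₁) ×ˢ (univ:Set G₂))) = ⊤ := by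
  rw [eq_top_iff]
  rintro ⟨a, b⟩ -
  have h1 : ((1:G₁), b) ∈ Subgroup.closure ((S ×ˢ ({1}:Set G₂)) ∪ (({1}:Set G₁) ×ˢ (univ:Set G₂))) :=
    subset_closure (Or.inr ⟨rfl, trivial⟩)
  have h2 : ((a:G₁), (1:G₂)) ∈ Subgroup.closure ((S ×ˢ ({1}:Set G₂)) ∪ (({1}:Set G₁) ×ˢ (univ:Set G₂))) := by
    have ha : a ∈ Subgroup.closure S := by rw [h]; trivial
    have hm : (MonoidHom.inl G₁ G₂) a ∈ (Subgroup.closure S).map (MonoidHom.inl G₁ G₂) :=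
      Subgroup.mem_map_of_mem _ ha
    rw [MonoidHom.map_closure] at hm
    refine Subgroup.closure_mono ?_ hm
    rintro _ ⟨s, hs, rfl⟩
    exact Or.inl ⟨hs, rfl⟩
  have : ((a, (1:G₂)) * ((1:G₁), b)) = (a, b) := by simp
  rw [← this]
  exact mul_mem h2 h1

lemma mem_prodSet (S : Set G₁) (p : G₁ × G₂) :
    p ∈ (S ×ˢ ({1}:Set G₂)) ∪ (({1}:Set G₁) ×ˢ (univ:Set G₂)) ↔
      (p.1 ∈ S ∧ p.2 = 1) ∨ p.1 = 1 := by
  obtain ⟨a, b⟩ := p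
  simp only [Set.mem_union, Set.mem_prod, Set.mem_singleton_iff, Set.mem_univ, and_true]

lemma cca_prod (h : IsCCA (G₁ × G₂)) : IsCCA G₁ := by
  intro S hS hgen φ hφ
  set S' := (S ×ˢ ({1}:Set G₂)) ∪ (({1}:Set G₁) ×ˢ (univ:Set G₂)) with hS'
  have hcp : ColourPreserving S' ⇑(Equiv.prodCongr φ (Equiv.refl G₂)) := by
    rintro ⟨x₁, x₂⟩ ⟨s₁, s₂⟩ hs
    rcases (mem_prodSet S _).1 hs with ⟨ha, hb⟩ | ha
    · dsimp at ha hb; subst hb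
      rcases hφ x₁ s₁ ha with h' | h'
      · left; simp [Prod.ext_iff, h']
      · right; simp [Prod.ext_iff, h']
    · dsimp at ha; subst ha
      left; simp [Prod.ext_iff]
  exact affine_of_prodCongr φ
    (h S' (inv_prodSet S hS) (closure_prodSet S hgen) _ hcp)

lemma scca_prod (h : IsStronglyCCA (G₁ × G₂)) : IsStronglyCCA G₁ := by
  classical
  intro S hS hgen φ hφ
  obtain ⟨π, hbij, hinv, hedge⟩ := hφ
  have hπ1 : 1 ∈ S → π 1 = 1 := by
    intro h1
    rcases hedge 1 1 h1 with h' | h'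
    · rw [mul_one] at h'; exact (left_eq_mul.mp h')
    · rw [mul_one] at h'; exact inv_eq_one.mp (left_eq_mul.mp h')
  have hπne : ∀ s ∈ S, s ≠ 1 → π s ≠ 1 := by
    intro s hs hne hcon
    rcases hedge 1 s hs with h' | h' <;>
    · rw [one_mul, hcon] at h'; simp at h'; exact hne h'
  set S₀ := S \ {1} with hS₀def
  have hS₀S : S₀ ⊆ S := diff_subset
  have h1S₀ : (1:G₁) ∉ S₀ := fun h' => h'.2 rfl
  have hS₀inv : S₀⁻¹ = S₀ := by
    ext a
    have ha : a⁻¹ ∈ S ↔ a ∈ S := by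
      constructor
      · intro h'; rw [← hS]; simpa using Set.inv_mem_inv.mpr h'
      · intro h'; rw [← hS] at h'; simpa using h'
    simp [hS₀def, Set.mem_diff, ha, inv_eq_one]
  have hgen₀ : Subgroup.closure S₀ = ⊤ := by
    rw [eq_top_iff, ← hgen]
    refine (Subgroup.closure_le _).mpr ?_
    intro s hs
    by_cases h1 : s = 1
    · subst h1; exact one_mem _
    · exact subset_closure ⟨hs, h1⟩
  have hmaps₀ : ∀ s ∈ S₀, π s ∈ S₀ := fun s hs =>
    ⟨hbij.mapsTo (hS₀S hs), hπne s hs.1 hs.2⟩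
  have hsurj₀ : ∀ t ∈ S₀, ∃ s ∈ S₀, π s = t := by
    intro t ht
    obtain ⟨s, hsS, hst⟩ := hbij.surjOn (hS₀S ht)
    refine ⟨s, ⟨hsS, ?_⟩, hst⟩
    intro h1
    rw [Set.mem_singleton_iff] at h1
    subst h1
    rw [hπ1 hsS] at hst
    exact ht.2 hst.symm
  set S' := (S₀ ×ˢ ({1}:Set G₂)) ∪ (({1}:Set G₁) ×ˢ (univ:Set G₂)) with hS'
  set π' : G₁ × G₂ → G₁ × G₂ :=
    fun p => if p.2 = 1 ∧ p.1 ∈ S₀ then (π p.1, (1:G₂)) else p with hπ'def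
  have hπ'pos : ∀ p : G₁ × G₂, p.2 = 1 → p.1 ∈ S₀ → π' p = (π p.1, 1) := by
    intro p h1 h2; rw [hπ'def]; exact if_pos ⟨h1, h2⟩
  have hπ'neg : ∀ p : G₁ × G₂, p.1 = 1 → π' p = p := by
    intro p h1; rw [hπ'def]; exact if_neg (fun hc => h1S₀ (h1 ▸ hc.2))
  have hbij' : Set.BijOn π' S' S' := by
    refine ⟨?_, ?_, ?_⟩
    · intro p hp
      rcases (mem_prodSet S₀ p).1 hp with ⟨ha, hb⟩ | ha
      · rw [hπ'pos p hb ha]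
        exact (mem_prodSet S₀ _).2 (Or.inl ⟨hmaps₀ _ ha, rfl⟩)
      · rw [hπ'neg p ha]; exact hp
    · intro p hp q hq heq
      rcases (mem_prodSet S₀ p).1 hp with ⟨hpa, hpb⟩ | hpa <;>
        rcases (mem_prodSet S₀ q).1 hq with ⟨hqa, hqb⟩ | hqa
      · rw [hπ'pos p hpb hpa, hπ'pos q hqb hqa] at heq
        have h1 : π p.1 = π q.1 := congrArg Prod.fst heq
        have := hbij.injOn (hS₀S hpa) (hS₀S hqa) h1
        exact Prod.ext this (hpb.trans hqb.symm)
      · rw [hπ'pos p hpb hpa, hπ'neg q hqa] at heq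
        have : π p.1 = 1 := (congrArg Prod.fst heq).trans hqa
        exact absurd this (hmaps₀ _ hpa).2
      · rw [hπ'neg p hpa, hπ'pos q hqb hqa] at heq
        have : π q.1 = 1 := (congrArg Prod.fst heq).symm.trans hpa
        exact absurd this (hmaps₀ _ hqa).2
      · rw [hπ'neg p hpa, hπ'neg q hqa] at heq; exact heq
    · intro q hq
      rcases (mem_prodSet S₀ q).1 hq with ⟨hqa, hqb⟩ | hqa
      · obtain ⟨s, hs, hst⟩ := hsurj₀ q.1 hqa
        refine ⟨(s, 1), (mem_prodSet S₀ _).2 (Or.inl ⟨hs, rfl⟩), ?_⟩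
        rw [hπ'pos (s,1) rfl hs]
        exact Prod.ext hst hqb.symm
      · exact ⟨q, hq, hπ'neg q hqa⟩
  have hinv' : ∀ s ∈ S', π' s⁻¹ = (π' s)⁻¹ := by
    intro p hp
    rcases (mem_prodSet S₀ p).1 hp with ⟨ha, hb⟩ | ha
    · have ha' : p⁻¹.1 ∈ S₀ := by
        rw [← hS₀inv]; simpa using ha
      have hb' : p⁻¹.2 = 1 := by simp [hb]
      rw [hπ'pos _ hb' ha', hπ'pos p hb ha]
      have := hinv p.1 (hS₀S ha)
      simp [Prod.ext_iff, this]
    · have : p⁻¹.1 = 1 := by simp [ha]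
      rw [hπ'neg _ this, hπ'neg p ha]
  have hedge' : ∀ x : G₁ × G₂, ∀ s ∈ S',
      (Equiv.prodCongr φ (Equiv.refl G₂)) (x * s) = (Equiv.prodCongr φ (Equiv.refl G₂)) x * π' s ∨
      (Equiv.prodCongr φ (Equiv.refl G₂)) (x * s) = (Equiv.prodCongr φ (Equiv.refl G₂)) x * (π' s)⁻¹ := by
    rintro ⟨x₁, x₂⟩ ⟨s₁, s₂⟩ hs
    rcases (mem_prodSet S₀ _).1 hs with ⟨ha, hb⟩ | ha
    · dsimp at ha hb; subst hb
      rw [hπ'pos (s₁, 1) rfl ha]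
      rcases hedge x₁ s₁ (hS₀S ha) with h' | h'
      · left; simp [Prod.ext_iff, h']
      · right; simp [Prod.ext_iff, h']
    · dsimp at ha; subst ha
      rw [hπ'neg (1, s₂) rfl]
      left; simp [Prod.ext_iff]
  exact affine_of_prodCongr φ
    (h S' (inv_prodSet S₀ hS₀inv) (closure_prodSet S₀ hgen₀) _ ⟨π', hbij', hinv', hedge'⟩)

end helpers

/-- If `G₁` is not (strongly) CCA, then neither is `G₁ × G₂`. -/
theorem stmt_10 {G₁ G₂ : Type*} [Group G₁] [Group G₂] [Finite G₁] [Finite G₂] :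
    (¬ IsStronglyCCA G₁ → ¬ IsStronglyCCA (G₁ × G₂)) ∧
    (¬ IsCCA G₁ → ¬ IsCCA (G₁ × G₂)) := by
  exact ⟨fun h1 h2 => h1 (scca_prod h2), fun h1 h2 => h1 (cca_prod h2)⟩
end

section
/- Let G₁, G₂ be finite groups with gcd(|G₁|, |G₂|) = 1. Then G₁ × G₂ is CCA if and only if both G₁ and G₂ are CCA; likewise G₁ × G₂ is strongly CCA if and only if both G₁ and G₂ are strongly CCA. -/
section SignLemma
variable {G : Type*} [Group G]

lemma pow_colour_aux (φ : Equiv.Perm G) {s t : G}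
    (hcol : ∀ x : G, φ (x * s) = φ x * t ∨ φ (x * s) = φ x * t⁻¹)
    (hst : s * s = 1 → t * t = 1) (x : G) :
    ∀ n : ℕ, (∀ k ≤ n, φ (x * s ^ k) = φ x * t ^ k) ∨
      (∀ k ≤ n, φ (x * s ^ k) = φ x * (t⁻¹) ^ k) := by
  intro n
  induction n with
  | zero =>
    left
    intro k hk
    interval_cases k
    simp
  | succ n ih =>
    have hstep : φ (x * s ^ (n+1)) = φ (x * s ^ n) * t ∨
        φ (x * s ^ (n+1)) = φ (x * s ^ n) * t⁻¹ := by
      have := hcol (x * s ^ n)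
      rwa [mul_assoc, ← pow_succ] at this
    rcases ih with h | h
    · rcases hstep with h1 | h1
      · -- stays on the positive branch
        left
        intro k hk
        rcases Nat.le_succ_iff.mp hk with hk' | rfl
        · exact h k hk'
        · rw [h1, h n le_rfl, mul_assoc, ← pow_succ]
      · -- sign flip
        match n, h with
        | 0, h =>
          right
          intro k hk
          interval_cases k
          · simp
          · simpa [h 0 (by norm_num)] using h1
        | (m+1), h =>
          -- φ (x * s^(m+2)) = φ x * t^(m+1) * t⁻¹ = φ x * t^m = φ (x * s^m)
          have hm : φ (x * s ^ m) = φ x * t ^ m := h m (by omega)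
          have he : φ (x * s ^ (m+1+1)) = φ (x * s ^ m) := by
            rw [h1, h (m+1) le_rfl, hm, mul_assoc, pow_succ, mul_assoc,
              mul_inv_cancel, mul_one]
          have hs2 : s * s = 1 := by
            have heq : x * s ^ (m + 2) = x * s ^ m := φ.injective he
            have hcan : s ^ m * (s * s) = s ^ m * 1 := by
              rw [mul_one, ← pow_two, ← pow_add]
              exact mul_left_cancel heq
            exact mul_left_cancel hcan
          have ht2 : t * t = 1 := hst hs2
          left
          intro k hk
          rcases Nat.le_succ_iff.mp hk with hk' | rfl
          · exact h k hk'
          · rw [he, hm]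
            congr 1
            have h4 : t ^ (m + 1 + 1) = t ^ m * (t * t) := by
              rw [pow_succ, pow_succ, mul_assoc]
            rw [h4, ht2, mul_one]
    · rcases hstep with h1 | h1
      · -- flip on negative branch
        match n, h with
        | 0, h =>
          left
          intro k hk
          interval_cases k
          · simp
          · simpa [h 0 (by norm_num)] using h1
        | (m+1), h =>
          have hm : φ (x * s ^ m) = φ x * (t⁻¹) ^ m := h m (by omega)
          have he : φ (x * s ^ (m+1+1)) = φ (x * s ^ m) := by
            rw [h1, h (m+1) le_rfl, hm, mul_assoc, pow_succ, mul_assoc,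
              inv_mul_cancel, mul_one]
          have hs2 : s * s = 1 := by
            have heq : x * s ^ (m + 2) = x * s ^ m := φ.injective he
            have hcan : s ^ m * (s * s) = s ^ m * 1 := by
              rw [mul_one, ← pow_two, ← pow_add]
              exact mul_left_cancel heq
            exact mul_left_cancel hcan
          have ht2 : t⁻¹ * t⁻¹ = 1 := by
            rw [← mul_inv_rev, hst hs2, inv_one]
          right
          intro k hk
          rcases Nat.le_succ_iff.mp hk with hk' | rfl
          · exact h k hk'
          · rw [he, hm]
            congr 1
            have h4 : (t⁻¹) ^ (m + 1 + 1) = (t⁻¹) ^ m * (t⁻¹ * t⁻¹) := by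
              rw [pow_succ, pow_succ, mul_assoc]
            rw [h4, ht2, mul_one]
      · right
        intro k hk
        rcases Nat.le_succ_iff.mp hk with hk' | rfl
        · exact h k hk'
        · rw [h1, h n le_rfl, mul_assoc, ← pow_succ]

lemma pow_colour (φ : Equiv.Perm G) {s t : G}
    (hcol : ∀ x : G, φ (x * s) = φ x * t ∨ φ (x * s) = φ x * t⁻¹)
    (hst : s * s = 1 → t * t = 1) (x : G) (n : ℕ) :
    φ (x * s ^ n) = φ x * t ^ n ∨ φ (x * s ^ n) = φ x * (t ^ n)⁻¹ := by
  rcases pow_colour_aux φ hcol hst x n with h | h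
  · exact Or.inl (h n le_rfl)
  · right
    rw [h n le_rfl, inv_pow]
end SignLemma

section Transport
variable {G H : Type*} [Group G] [Group H]

lemma symm_image_inv_closed (e : G ≃* H) {S : Set H} (hS : S⁻¹ = S) :
    (⇑e.symm '' S)⁻¹ = ⇑e.symm '' S := by
  have hmem : ∀ s ∈ S, s⁻¹ ∈ S := by
    intro s hs
    rw [← hS]
    simpa using hs
  ext z
  constructor
  · rintro hz
    rw [Set.mem_inv] at hz
    obtain ⟨s, hsS, hse⟩ := hz
    refine ⟨s⁻¹, hmem s hsS, ?_⟩
    rw [map_inv, hse, inv_inv]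
  · rintro ⟨s, hsS, rfl⟩
    rw [Set.mem_inv, ← map_inv]
    exact ⟨s⁻¹, hmem s hsS, rfl⟩

lemma symm_image_closure_top (e : G ≃* H) {S : Set H} (hgen : Subgroup.closure S = ⊤) :
    Subgroup.closure (⇑e.symm '' S) = ⊤ := by
  have h1 := MonoidHom.map_closure e.symm.toMonoidHom S
  rw [hgen, Subgroup.map_top_of_surjective _ e.symm.surjective] at h1
  rw [show ⇑e.symm '' S = ⇑e.symm.toMonoidHom '' S from rfl, ← h1]

lemma isCCA_of_mulEquiv (e : G ≃* H) (h : IsCCA G) : IsCCA H := by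
  intro S hS hgen φ hφ
  set ψ : Equiv.Perm G := (e.toEquiv.trans φ).trans e.symm.toEquiv with hψdef
  have hψapp : ∀ x, ψ x = e.symm (φ (e x)) := fun x => rfl
  have hcp : ColourPreserving (⇑e.symm '' S) ⇑ψ := by
    rintro x s' ⟨s, hsS, rfl⟩
    have he1 : e (x * e.symm s) = e x * s := by
      rw [map_mul, MulEquiv.apply_symm_apply]
    rcases hφ (e x) s hsS with h1 | h1
    · left; rw [hψapp, hψapp, he1, h1, map_mul]
    · right; rw [hψapp, hψapp, he1, h1, map_mul, map_inv]
  obtain ⟨α, g, hag⟩ := h _ (symm_image_inv_closed e hS) (symm_image_closure_top e hgen) ψ hcp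
  refine ⟨(e.symm.trans α).trans e, e g, fun y => ?_⟩
  have h2 := hag (e.symm y)
  rw [hψapp, MulEquiv.apply_symm_apply] at h2
  have h3 : e.symm (e g * y) = g * e.symm y := by
    rw [map_mul, MulEquiv.symm_apply_apply]
  calc φ y = e (e.symm (φ y)) := by rw [MulEquiv.apply_symm_apply]
    _ = e (α (g * e.symm y)) := by rw [h2]
    _ = ((e.symm.trans α).trans e) (e g * y) := by
        simp only [MulEquiv.trans_apply, h3]

lemma isStronglyCCA_of_mulEquiv (e : G ≃* H) (h : IsStronglyCCA G) : IsStronglyCCA H := by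
  intro S hS hgen φ hφ
  obtain ⟨π, hπbij, hπinv, hπcol⟩ := hφ
  set ψ : Equiv.Perm G := (e.toEquiv.trans φ).trans e.symm.toEquiv with hψdef
  have hψapp : ∀ x, ψ x = e.symm (φ (e x)) := fun x => rfl
  set π' : G → G := ⇑e.symm ∘ π ∘ ⇑e with hπ'def
  have hmapsto : Set.MapsTo π' (⇑e.symm '' S) (⇑e.symm '' S) := by
    rintro z ⟨s, hsS, rfl⟩
    refine ⟨π s, hπbij.mapsTo hsS, ?_⟩
    simp [hπ'def]
  have hcperm : ColourPermuting (⇑e.symm '' S) ⇑ψ := by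
    refine ⟨π', ⟨hmapsto, ?_, ?_⟩, ?_, ?_⟩
    · rintro z ⟨s, hsS, rfl⟩ w ⟨u, huS, rfl⟩ hzw
      simp only [hπ'def, Function.comp_apply, MulEquiv.apply_symm_apply] at hzw
      have := hπbij.injOn hsS huS (e.symm.injective hzw)
      rw [this]
    · rintro w ⟨s, hsS, rfl⟩
      obtain ⟨u, huS, hu⟩ := hπbij.surjOn hsS
      refine ⟨e.symm u, ⟨u, huS, rfl⟩, ?_⟩
      simp only [hπ'def, Function.comp_apply, MulEquiv.apply_symm_apply, hu]
    · rintro s' ⟨s, hsS, rfl⟩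
      simp only [hπ'def, Function.comp_apply, ← map_inv, MulEquiv.apply_symm_apply]
      rw [hπinv s hsS, map_inv]
    · rintro x s' ⟨s, hsS, rfl⟩
      have he1 : e (x * e.symm s) = e x * s := by
        rw [map_mul, MulEquiv.apply_symm_apply]
      have hπ's : π' (e.symm s) = e.symm (π s) := by
        simp [hπ'def]
      rcases hπcol (e x) s hsS with h1 | h1
      · left; rw [hψapp, hψapp, he1, h1, map_mul, hπ's]
      · right; rw [hψapp, hψapp, he1, h1, map_mul, map_inv, hπ's]
  obtain ⟨α, g, hag⟩ := h _ (symm_image_inv_closed e hS) (symm_image_closure_top e hgen) ψ hcperm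
  refine ⟨(e.symm.trans α).trans e, e g, fun y => ?_⟩
  have h2 := hag (e.symm y)
  rw [hψapp, MulEquiv.apply_symm_apply] at h2
  have h3 : e.symm (e g * y) = g * e.symm y := by
    rw [map_mul, MulEquiv.symm_apply_apply]
  calc φ y = e (e.symm (φ y)) := by rw [MulEquiv.apply_symm_apply]
    _ = e (α (g * e.symm y)) := by rw [h2]
    _ = ((e.symm.trans α).trans e) (e g * y) := by
        simp only [MulEquiv.trans_apply, h3]
end Transport

section Forward
variable {G₁ G₂ : Type*} [Group G₁] [Group G₂] [Finite G₁] [Finite G₂]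

lemma snd_eq_one_of_snd_eq_one (hco : Nat.Coprime (Nat.card G₁) (Nat.card G₂))
    (α : (G₁ × G₂) ≃* (G₁ × G₂)) (z : G₁ × G₂) (hz : z.2 = 1) : (α z).2 = 1 := by
  have h1 : z ^ Nat.card G₁ = 1 := by
    have : (z ^ Nat.card G₁).1 = z.1 ^ Nat.card G₁ := rfl
    have h2 : (z ^ Nat.card G₁).2 = z.2 ^ Nat.card G₁ := rfl
    rw [Prod.ext_iff, this, h2, hz, one_pow]
    exact ⟨pow_card_eq_one', rfl⟩
  have h2 : (α z) ^ Nat.card G₁ = 1 := by rw [← map_pow, h1, map_one]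
  have ha : (α z).2 ^ Nat.card G₁ = 1 := by
    have : ((α z) ^ Nat.card G₁).2 = (α z).2 ^ Nat.card G₁ := rfl
    rw [← this, h2]; rfl
  have hb : (α z).2 ^ Nat.card G₂ = 1 := pow_card_eq_one'
  have hd : orderOf (α z).2 ∣ Nat.gcd (Nat.card G₁) (Nat.card G₂) :=
    Nat.dvd_gcd (orderOf_dvd_of_pow_eq_one ha) (orderOf_dvd_of_pow_eq_one hb)
  rw [hco] at hd
  exact orderOf_eq_one_iff.mp (Nat.eq_one_of_dvd_one hd)

lemma fst_eq_one_of_fst_eq_one (hco : Nat.Coprime (Nat.card G₁) (Nat.card G₂))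
    (α : (G₁ × G₂) ≃* (G₁ × G₂)) (z : G₁ × G₂) (hz : z.1 = 1) : (α z).1 = 1 := by
  have h1 : z ^ Nat.card G₂ = 1 := by
    have h2 : (z ^ Nat.card G₂).1 = z.1 ^ Nat.card G₂ := rfl
    rw [Prod.ext_iff, h2, hz, one_pow]
    exact ⟨rfl, pow_card_eq_one'⟩
  have h2 : (α z) ^ Nat.card G₂ = 1 := by rw [← map_pow, h1, map_one]
  have ha : (α z).1 ^ Nat.card G₂ = 1 := by
    have : ((α z) ^ Nat.card G₂).1 = (α z).1 ^ Nat.card G₂ := rfl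
    rw [← this, h2]; rfl
  have hb : (α z).1 ^ Nat.card G₁ = 1 := pow_card_eq_one'
  have hd : orderOf (α z).1 ∣ Nat.gcd (Nat.card G₁) (Nat.card G₂) :=
    Nat.dvd_gcd (orderOf_dvd_of_pow_eq_one hb) (orderOf_dvd_of_pow_eq_one ha)
  rw [hco] at hd
  exact orderOf_eq_one_iff.mp (Nat.eq_one_of_dvd_one hd)

/-- The automorphism of `G₁` induced by an automorphism of a coprime product. -/
noncomputable def fstAut (hco : Nat.Coprime (Nat.card G₁) (Nat.card G₂))
    (α : (G₁ × G₂) ≃* (G₁ × G₂)) : G₁ ≃* G₁ where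
  toFun a := (α (a, 1)).1
  invFun a := (α.symm (a, 1)).1
  left_inv a := by
    have h1 : ((α (a, 1)).1, (1 : G₂)) = α (a, 1) := by
      rw [Prod.ext_iff]
      exact ⟨rfl, (snd_eq_one_of_snd_eq_one hco α (a, 1) rfl).symm⟩
    show (α.symm ((α (a, 1)).1, 1)).1 = a
    rw [h1, MulEquiv.symm_apply_apply]
  right_inv a := by
    have h1 : ((α.symm (a, 1)).1, (1 : G₂)) = α.symm (a, 1) := by
      rw [Prod.ext_iff]
      refine ⟨rfl, ?_⟩
      exact (snd_eq_one_of_snd_eq_one hco α.symm (a, 1) rfl).symm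
    show (α ((α.symm (a, 1)).1, 1)).1 = a
    rw [h1, MulEquiv.apply_symm_apply]
  map_mul' a b := by
    show (α ((a * b : G₁), (1 : G₂))).1 = (α (a, 1)).1 * (α (b, 1)).1
    have h1 : ((a * b : G₁), (1 : G₂)) = (a, (1:G₂)) * (b, (1:G₂)) := by
      simp [Prod.ext_iff]
    rw [h1, map_mul]
    rfl

lemma affine_fst (hco : Nat.Coprime (Nat.card G₁) (Nat.card G₂))
    (α : (G₁ × G₂) ≃* (G₁ × G₂)) (g : G₁ × G₂) (x : G₁) :
    (α (g * (x, 1))).1 = fstAut hco α (g.1 * x) := by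
  have hsplit : g * (x, (1:G₂)) = ((g.1 * x, (1:G₂)) : G₁ × G₂) * ((1 : G₁), g.2) := by
    simp [Prod.ext_iff]
  rw [hsplit, map_mul, Prod.fst_mul]
  rw [fst_eq_one_of_fst_eq_one hco α ((1:G₁), g.2) rfl, mul_one]
  rfl
end Forward

section ForwardMain
variable {G₁ G₂ : Type*} [Group G₁] [Group G₂] [Finite G₁] [Finite G₂]

/-- The standard connection set on the product used to test the first factor. -/
def testSet (S₁ : Set G₁) : Set (G₁ × G₂) :=
  {z | (z.2 = 1 ∧ z.1 ∈ S₁) ∨ (z.1 = 1 ∧ z.2 ≠ 1)}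

lemma testSet_inv {S₁ : Set G₁} (hS₁ : S₁⁻¹ = S₁) :
    (testSet (G₂ := G₂) S₁)⁻¹ = testSet S₁ := by
  have hS₁' : ∀ a : G₁, a⁻¹ ∈ S₁ ↔ a ∈ S₁ := by
    intro a
    constructor
    · intro h; rw [← hS₁]; simpa using h
    · intro h; rw [← hS₁]; simpa using h
  ext z
  rw [Set.mem_inv]
  show ((z⁻¹.2 = 1 ∧ z⁻¹.1 ∈ S₁) ∨ _) ↔ _
  rw [show z⁻¹.2 = z.2⁻¹ from rfl, show z⁻¹.1 = z.1⁻¹ from rfl]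
  simp only [inv_eq_one, ne_eq, hS₁']
  rfl

lemma testSet_closure {S₁ : Set G₁} (hgen₁ : Subgroup.closure S₁ = ⊤) :
    Subgroup.closure (testSet (G₂ := G₂) S₁) = ⊤ := by
  rw [eq_top_iff]
  rintro ⟨a, b⟩ -
  have hmem1 : ∀ a : G₁, ((a, 1) : G₁ × G₂) ∈ Subgroup.closure (testSet (G₂ := G₂) S₁) := by
    intro a
    have ha : a ∈ Subgroup.closure S₁ := by rw [hgen₁]; exact Subgroup.mem_top a
    refine Subgroup.closure_induction
      (p := fun a _ => ((a, 1) : G₁ × G₂) ∈ Subgroup.closure (testSet (G₂ := G₂) S₁))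
      ?_ ?_ ?_ ?_ ha
    · intro x hx
      exact Subgroup.subset_closure (Or.inl ⟨rfl, hx⟩)
    · exact Subgroup.one_mem _
    · intro x y _ _ hx hy
      have : ((x * y, 1) : G₁ × G₂) = (x, 1) * (y, 1) := by simp [Prod.ext_iff]
      rw [this]; exact Subgroup.mul_mem _ hx hy
    · intro x _ hx
      have : ((x⁻¹, 1) : G₁ × G₂) = ((x, 1) : G₁ × G₂)⁻¹ := by simp [Prod.ext_iff]
      rw [this]; exact Subgroup.inv_mem _ hx
  have hmem2 : ∀ b : G₂, ((1, b) : G₁ × G₂) ∈ Subgroup.closure (testSet (G₂ := G₂) S₁) := by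
    intro b
    by_cases hb : b = 1
    · subst hb; exact Subgroup.one_mem _
    · exact Subgroup.subset_closure (Or.inr ⟨rfl, hb⟩)
  have : ((a, b) : G₁ × G₂) = (a, 1) * (1, b) := by simp [Prod.ext_iff]
  rw [this]
  exact Subgroup.mul_mem _ (hmem1 a) (hmem2 b)

lemma isCCA_fst (hco : Nat.Coprime (Nat.card G₁) (Nat.card G₂))
    (h : IsCCA (G₁ × G₂)) : IsCCA G₁ := by
  intro S₁ hS₁ hgen₁ φ₁ hφ₁
  set φ : Equiv.Perm (G₁ × G₂) := Equiv.prodCongr φ₁ (Equiv.refl G₂) with hφdef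
  have happ : ∀ z : G₁ × G₂, φ z = (φ₁ z.1, z.2) := fun z => rfl
  have hcp : ColourPreserving (testSet S₁) ⇑φ := by
    rintro x s (⟨h2, h1⟩ | ⟨h1, h2⟩)
    · rcases hφ₁ x.1 s.1 h1 with hc | hc
      · left
        rw [happ, happ, Prod.ext_iff]
        exact ⟨by rw [Prod.fst_mul, Prod.fst_mul, hc], by rw [Prod.snd_mul, Prod.snd_mul, h2]⟩
      · right
        rw [happ, happ, Prod.ext_iff]
        constructor
        · rw [Prod.fst_mul, Prod.fst_mul, hc]; rfl
        · rw [Prod.snd_mul, Prod.snd_mul, show (s⁻¹).2 = s.2⁻¹ from rfl, h2]; simp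
    · left
      rw [happ, happ, Prod.ext_iff]
      constructor
      · rw [Prod.fst_mul, Prod.fst_mul, h1, mul_one, mul_one]
      · rw [Prod.snd_mul, Prod.snd_mul]
  obtain ⟨α, g, hag⟩ := h _ (testSet_inv hS₁) (testSet_closure hgen₁) φ hcp
  refine ⟨fstAut hco α, g.1, fun x => ?_⟩
  have h1 := hag ((x, 1) : G₁ × G₂)
  rw [happ] at h1
  have h2 := congrArg Prod.fst h1
  rw [affine_fst hco α g x] at h2
  exact h2

open Classical in
lemma isStronglyCCA_fst (hco : Nat.Coprime (Nat.card G₁) (Nat.card G₂))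
    (h : IsStronglyCCA (G₁ × G₂)) : IsStronglyCCA G₁ := by
  intro S₁ hS₁ hgen₁ φ₁ hφ₁
  obtain ⟨π₁, hπbij, hπinv, hπcol⟩ := hφ₁
  set φ : Equiv.Perm (G₁ × G₂) := Equiv.prodCongr φ₁ (Equiv.refl G₂) with hφdef
  have happ : ∀ z : G₁ × G₂, φ z = (φ₁ z.1, z.2) := fun z => rfl
  set Pe : G₁ × G₂ → G₁ × G₂ := fun z => if z.2 = 1 then (π₁ z.1, 1) else z with hPedef
  have hPe1 : ∀ z : G₁ × G₂, z.2 = 1 → Pe z = (π₁ z.1, 1) := by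
    intro z hz; simp [hPedef, hz]
  have hPe2 : ∀ z : G₁ × G₂, z.2 ≠ 1 → Pe z = z := by
    intro z hz; simp [hPedef, hz]
  have hperm : ColourPermuting (testSet S₁) ⇑φ := by
    refine ⟨Pe, ⟨?_, ?_, ?_⟩, ?_, ?_⟩
    · rintro z (⟨h2, h1⟩ | ⟨h1, h2⟩)
      · rw [hPe1 z h2]
        exact Or.inl ⟨rfl, hπbij.mapsTo h1⟩
      · rw [hPe2 z h2]
        exact Or.inr ⟨h1, h2⟩
    · rintro z (⟨hz2, hz1⟩ | ⟨hz1, hz2⟩) w (⟨hw2, hw1⟩ | ⟨hw1, hw2⟩) hzw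
      · rw [hPe1 z hz2, hPe1 w hw2, Prod.ext_iff] at hzw
        have := hπbij.injOn hz1 hw1 hzw.1
        rw [Prod.ext_iff, hz2, hw2]
        exact ⟨this, rfl⟩
      · rw [hPe1 z hz2, hPe2 w hw2] at hzw
        exact absurd (congrArg Prod.snd hzw).symm hw2
      · rw [hPe2 z hz2, hPe1 w hw2] at hzw
        exact absurd (congrArg Prod.snd hzw) hz2
      · rwa [hPe2 z hz2, hPe2 w hw2] at hzw
    · rintro w (⟨h2, h1⟩ | ⟨h1, h2⟩)
      · obtain ⟨u, hu, huw⟩ := hπbij.surjOn h1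
        refine ⟨(u, 1), Or.inl ⟨rfl, hu⟩, ?_⟩
        rw [hPe1 (u, 1) rfl]
        rw [Prod.ext_iff]
        exact ⟨huw, h2.symm⟩
      · exact ⟨w, Or.inr ⟨h1, h2⟩, hPe2 w h2⟩
    · rintro s (⟨h2, h1⟩ | ⟨h1, h2⟩)
      · have hs2 : (s⁻¹).2 = 1 := by rw [show (s⁻¹).2 = s.2⁻¹ from rfl, h2, inv_one]
        rw [hPe1 s h2, hPe1 s⁻¹ hs2, show (s⁻¹).1 = s.1⁻¹ from rfl, hπinv s.1 h1]
        simp [Prod.ext_iff]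
      · have hs2 : (s⁻¹).2 ≠ 1 := by
          rw [show (s⁻¹).2 = s.2⁻¹ from rfl]
          simpa using h2
        rw [hPe2 s h2, hPe2 s⁻¹ hs2]
    · rintro x s (⟨h2, h1⟩ | ⟨h1, h2⟩)
      · rw [hPe1 s h2]
        rcases hπcol x.1 s.1 h1 with hc | hc
        · left
          rw [happ, happ, Prod.ext_iff]
          exact ⟨by rw [Prod.fst_mul, Prod.fst_mul, hc], by rw [Prod.snd_mul, Prod.snd_mul, h2]⟩
        · right
          rw [happ, happ, Prod.ext_iff]
          constructor
          · rw [Prod.fst_mul, Prod.fst_mul, hc]; rfl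
          · rw [Prod.snd_mul, Prod.snd_mul, h2]; simp
      · rw [hPe2 s h2]
        left
        rw [happ, happ, Prod.ext_iff]
        constructor
        · rw [Prod.fst_mul, Prod.fst_mul, h1, mul_one, mul_one]
        · rw [Prod.snd_mul, Prod.snd_mul]
  obtain ⟨α, g, hag⟩ := h _ (testSet_inv hS₁) (testSet_closure hgen₁) φ hperm
  refine ⟨fstAut hco α, g.1, fun x => ?_⟩
  have h1 := hag ((x, 1) : G₁ × G₂)
  rw [happ] at h1
  have h2 := congrArg Prod.fst h1
  rw [affine_fst hco α g x] at h2
  exact h2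
end ForwardMain

section TransportCol
variable {G H : Type*} [Group G] [Group H]

lemma transport_cp (e : G ≃* H) {S : Set H} (φ : Equiv.Perm H) (hφ : ColourPreserving S ⇑φ) :
    ColourPreserving (⇑e.symm '' S) ⇑((e.toEquiv.trans φ).trans e.symm.toEquiv) := by
  set ψ : Equiv.Perm G := (e.toEquiv.trans φ).trans e.symm.toEquiv with hψdef
  have hψapp : ∀ x, ψ x = e.symm (φ (e x)) := fun x => rfl
  rintro x s' ⟨s, hsS, rfl⟩
  have he1 : e (x * e.symm s) = e x * s := by
    rw [map_mul, MulEquiv.apply_symm_apply]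
  rcases hφ (e x) s hsS with h1 | h1
  · left; rw [hψapp, hψapp, he1, h1, map_mul]
  · right; rw [hψapp, hψapp, he1, h1, map_mul, map_inv]

lemma transport_cperm (e : G ≃* H) {S : Set H} (φ : Equiv.Perm H) (hφ : ColourPermuting S ⇑φ) :
    ColourPermuting (⇑e.symm '' S) ⇑((e.toEquiv.trans φ).trans e.symm.toEquiv) := by
  obtain ⟨π, hπbij, hπinv, hπcol⟩ := hφ
  set ψ : Equiv.Perm G := (e.toEquiv.trans φ).trans e.symm.toEquiv with hψdef
  have hψapp : ∀ x, ψ x = e.symm (φ (e x)) := fun x => rfl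
  set π' : G → G := ⇑e.symm ∘ π ∘ ⇑e with hπ'def
  have hmapsto : Set.MapsTo π' (⇑e.symm '' S) (⇑e.symm '' S) := by
    rintro z ⟨s, hsS, rfl⟩
    refine ⟨π s, hπbij.mapsTo hsS, ?_⟩
    simp [hπ'def]
  refine ⟨π', ⟨hmapsto, ?_, ?_⟩, ?_, ?_⟩
  · rintro z ⟨s, hsS, rfl⟩ w ⟨u, huS, rfl⟩ hzw
    simp only [hπ'def, Function.comp_apply, MulEquiv.apply_symm_apply] at hzw
    have := hπbij.injOn hsS huS (e.symm.injective hzw)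
    rw [this]
  · rintro w ⟨s, hsS, rfl⟩
    obtain ⟨u, huS, hu⟩ := hπbij.surjOn hsS
    refine ⟨e.symm u, ⟨u, huS, rfl⟩, ?_⟩
    simp only [hπ'def, Function.comp_apply, MulEquiv.apply_symm_apply, hu]
  · rintro s' ⟨s, hsS, rfl⟩
    simp only [hπ'def, Function.comp_apply, ← map_inv, MulEquiv.apply_symm_apply]
    rw [hπinv s hsS, map_inv]
  · rintro x s' ⟨s, hsS, rfl⟩
    have he1 : e (x * e.symm s) = e x * s := by
      rw [map_mul, MulEquiv.apply_symm_apply]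
    have hπ's : π' (e.symm s) = e.symm (π s) := by
      simp [hπ'def]
    rcases hπcol (e x) s hsS with h1 | h1
    · left; rw [hψapp, hψapp, he1, h1, map_mul, hπ's]
    · right; rw [hψapp, hψapp, he1, h1, map_mul, map_inv, hπ's]
end TransportCol



section Backward
variable {G₁ G₂ : Type*} [Group G₁] [Group G₂] [Finite G₁] [Finite G₂]

lemma core (hco : Nat.Coprime (Nat.card G₁) (Nat.card G₂))
    (S : Set (G₁ × G₂)) (hS : S⁻¹ = S) (hgen : Subgroup.closure S = ⊤)
    (φ : Equiv.Perm (G₁ × G₂)) (π : G₁ × G₂ → G₁ × G₂)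
    (hπbij : Set.BijOn π S S) (hπinv : ∀ s ∈ S, π s⁻¹ = (π s)⁻¹)
    (hπcol : ∀ x : G₁ × G₂, ∀ s ∈ S, φ (x * s) = φ x * π s ∨ φ (x * s) = φ x * (π s)⁻¹) :
    ∃ (T₁ : Set G₁) (f : Equiv.Perm G₁),
      T₁⁻¹ = T₁ ∧ Subgroup.closure T₁ = ⊤ ∧ (∀ z : G₁ × G₂, (φ z).1 = f z.1) ∧
      ∀ a ∈ T₁, ∃ b ∈ T₁,
        (∀ x : G₁ × G₂,
          φ (x * (a, 1)) = φ x * (b, 1) ∨ φ (x * (a, 1)) = φ x * ((b, 1) : G₁ × G₂)⁻¹) ∧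
        (∀ x : G₁ × G₂,
          φ (x * (a⁻¹, 1)) = φ x * (b, 1) ∨ φ (x * (a⁻¹, 1)) = φ x * ((b, 1) : G₁ × G₂)⁻¹) ∧
        (a * a = 1 → b * b = 1) ∧
        (∃ s ∈ S, ∃ k : ℕ, s ^ k = ((a, 1) : G₁ × G₂) ∧ (π s) ^ k = ((b, 1) : G₁ × G₂)) := by
  have hSmem : ∀ s ∈ S, s⁻¹ ∈ S := by
    intro s hs
    rw [← hS]
    simpa using hs
  -- uniform power colouring
  have hPOW : ∀ s ∈ S, ∀ (x : G₁ × G₂) (n : ℕ),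
      φ (x * s ^ n) = φ x * (π s) ^ n ∨ φ (x * s ^ n) = φ x * ((π s) ^ n)⁻¹ := by
    intro s hs x n
    refine pow_colour φ (fun x => hπcol x s hs) ?_ x n
    intro hss
    have h1 : s⁻¹ = s := inv_eq_of_mul_eq_one_right hss
    have h2 := hπinv s hs
    rw [h1] at h2
    nth_rewrite 2 [h2]
    exact mul_inv_cancel _
  have hinj := φ.injective
  -- transfer of relations on powers
  have hker : ∀ s ∈ S, ∀ k : ℕ, (π s) ^ k = 1 → s ^ k = 1 := by
    intro s hs k hk
    rcases hPOW s hs 1 k with h | h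
    · rw [hk, mul_one] at h
      have := hinj h
      rwa [one_mul] at this
    · rw [hk, inv_one, mul_one] at h
      have := hinj h
      rwa [one_mul] at this
  have hker' : ∀ s ∈ S, ∀ k : ℕ, s ^ k = 1 → (π s) ^ k = 1 := by
    intro s hs k hk
    rcases hPOW s hs 1 k with h | h
    · rw [hk, mul_one] at h
      exact left_eq_mul.mp h
    · rw [hk, mul_one] at h
      exact inv_eq_one.mp (left_eq_mul.mp h)
  -- coprimality of orders of the components
  have hordco : ∀ z : G₁ × G₂, Nat.Coprime (orderOf z.1) (orderOf z.2) := by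
    intro z
    exact Nat.Coprime.coprime_dvd_left (orderOf_dvd_natCard z.1)
      (Nat.Coprime.coprime_dvd_right (orderOf_dvd_natCard z.2) hco)
  -- extraction of components as powers
  have hCRT1 : ∀ z : G₁ × G₂, ∃ k : ℕ, z ^ k = ((z.1, 1) : G₁ × G₂) := by
    intro z
    obtain ⟨k, hk1, hk2⟩ := Nat.chineseRemainder (hordco z) 1 0
    refine ⟨k, ?_⟩
    rw [Prod.ext_iff]
    constructor
    · rw [show (z ^ k).1 = z.1 ^ k from rfl]
      have := pow_eq_pow_iff_modEq.mpr hk1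
      simpa using this
    · rw [show (z ^ k).2 = z.2 ^ k from rfl]
      have := pow_eq_pow_iff_modEq.mpr hk2
      simpa using this
  have hCRT2 : ∀ z : G₁ × G₂, ∃ k : ℕ, z ^ k = ((1, z.2) : G₁ × G₂) := by
    intro z
    obtain ⟨k, hk1, hk2⟩ := Nat.chineseRemainder (hordco z) 0 1
    refine ⟨k, ?_⟩
    rw [Prod.ext_iff]
    constructor
    · rw [show (z ^ k).1 = z.1 ^ k from rfl]
      have := pow_eq_pow_iff_modEq.mpr hk1
      simpa using this
    · rw [show (z ^ k).2 = z.2 ^ k from rfl]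
      have := pow_eq_pow_iff_modEq.mpr hk2
      simpa using this
  -- the induced connection sets
  set T₁ : Set G₁ := {a | a ≠ 1 ∧ ∃ s ∈ S, ∃ k : ℕ, s ^ k = ((a, 1) : G₁ × G₂)} with hT₁def
  set T₂ : Set G₂ := {c | c ≠ 1 ∧ ∃ s ∈ S, ∃ k : ℕ, s ^ k = ((1, c) : G₁ × G₂)} with hT₂def
  have hT₁mem : ∀ a ∈ T₁, a⁻¹ ∈ T₁ := by
    rintro a ⟨ha1, s, hs, k, hsk⟩
    refine ⟨inv_ne_one.mpr ha1, s⁻¹, hSmem s hs, k, ?_⟩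
    rw [inv_pow, hsk]
    simp [Prod.ext_iff]
  have hT₁inv : T₁⁻¹ = T₁ := by
    ext a
    rw [Set.mem_inv]
    constructor
    · intro h
      have := hT₁mem a⁻¹ h
      rwa [inv_inv] at this
    · intro h
      exact hT₁mem a h
  -- generation
  have hcompT : ∀ s ∈ S, (s.1 = 1 ∨ s.1 ∈ T₁) ∧ (s.2 = 1 ∨ s.2 ∈ T₂) := by
    intro s hs
    constructor
    · by_cases h1 : s.1 = 1
      · exact Or.inl h1
      · exact Or.inr ⟨h1, s, hs, hCRT1 s⟩
    · by_cases h2 : s.2 = 1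
      · exact Or.inl h2
      · exact Or.inr ⟨h2, s, hs, hCRT2 s⟩
  have hcloT : Subgroup.closure T₁ = ⊤ ∧ Subgroup.closure T₂ = ⊤ := by
    have hSK : S ⊆ ↑((Subgroup.closure T₁).prod (Subgroup.closure T₂)) := by
      intro s hs
      rw [SetLike.mem_coe, Subgroup.mem_prod]
      obtain ⟨h1, h2⟩ := hcompT s hs
      constructor
      · rcases h1 with h | h
        · rw [h]; exact Subgroup.one_mem _
        · exact Subgroup.subset_closure h
      · rcases h2 with h | h
        · rw [h]; exact Subgroup.one_mem _
        · exact Subgroup.subset_closure h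
    have hle : (⊤ : Subgroup (G₁ × G₂)) ≤ (Subgroup.closure T₁).prod (Subgroup.closure T₂) := by
      rw [← hgen]
      exact (Subgroup.closure_le _).mpr hSK
    constructor
    · rw [eq_top_iff]
      intro a _
      have := hle (Subgroup.mem_top ((a, 1) : G₁ × G₂))
      exact (Subgroup.mem_prod.mp this).1
    · rw [eq_top_iff]
      intro c _
      have := hle (Subgroup.mem_top ((1, c) : G₁ × G₂))
      exact (Subgroup.mem_prod.mp this).2
  -- the key colour data for colours in the first factor
  have hKEY : ∀ a ∈ T₁, ∃ b ∈ T₁,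
      (∀ x : G₁ × G₂,
        φ (x * (a, 1)) = φ x * (b, 1) ∨ φ (x * (a, 1)) = φ x * ((b, 1) : G₁ × G₂)⁻¹) ∧
      (∀ x : G₁ × G₂,
        φ (x * (a⁻¹, 1)) = φ x * (b, 1) ∨ φ (x * (a⁻¹, 1)) = φ x * ((b, 1) : G₁ × G₂)⁻¹) ∧
      (a * a = 1 → b * b = 1) ∧
      (∃ s ∈ S, ∃ k : ℕ, s ^ k = ((a, 1) : G₁ × G₂) ∧ (π s) ^ k = ((b, 1) : G₁ × G₂)) := by
    rintro a ⟨ha1, s, hs, k, hsk⟩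
    have hs2k : s.2 ^ k = 1 := by
      have := congrArg Prod.snd hsk
      rwa [show (s ^ k).2 = s.2 ^ k from rfl] at this
    have hordd : orderOf ((π s).2) ∣ k := by
      have hπk : (π s) ^ (orderOf s) = 1 := hker' s hs _ (pow_orderOf_eq_one s)
      have h1 : orderOf ((π s).2) ∣ orderOf s := by
        apply orderOf_dvd_of_pow_eq_one
        rw [show (π s).2 ^ orderOf s = ((π s) ^ orderOf s).2 from rfl, hπk]
        rfl
      have h2 : orderOf s ∣ orderOf s.1 * orderOf s.2 := by
        apply orderOf_dvd_of_pow_eq_one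
        rw [Prod.ext_iff]
        constructor
        · rw [show (s ^ (orderOf s.1 * orderOf s.2)).1 = s.1 ^ (orderOf s.1 * orderOf s.2) from rfl,
            pow_mul, pow_orderOf_eq_one, one_pow]
          rfl
        · rw [show (s ^ (orderOf s.1 * orderOf s.2)).2 = s.2 ^ (orderOf s.1 * orderOf s.2) from rfl,
            mul_comm, pow_mul, pow_orderOf_eq_one, one_pow]
          rfl
      have h3 : orderOf ((π s).2) ∣ orderOf s.1 * orderOf s.2 := h1.trans h2
      have h4 : Nat.Coprime (orderOf ((π s).2)) (orderOf s.1) :=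
        Nat.Coprime.coprime_dvd_right (orderOf_dvd_natCard s.1)
          (Nat.Coprime.coprime_dvd_left (orderOf_dvd_natCard ((π s).2)) hco.symm)
      exact (Nat.Coprime.dvd_of_dvd_mul_left h4 h3).trans (orderOf_dvd_of_pow_eq_one hs2k)
    have hb2 : ((π s) ^ k).2 = 1 := by
      rw [show ((π s) ^ k).2 = (π s).2 ^ k from rfl]
      exact orderOf_dvd_iff_pow_eq_one.mp hordd
    set b := ((π s) ^ k).1 with hbdef
    have hπsk : (π s) ^ k = ((b, 1) : G₁ × G₂) := by
      rw [Prod.ext_iff]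
      exact ⟨rfl, hb2⟩
    have hca : ∀ x : G₁ × G₂,
        φ (x * (a, 1)) = φ x * (b, 1) ∨ φ (x * (a, 1)) = φ x * ((b, 1) : G₁ × G₂)⁻¹ := by
      intro x
      have := hPOW s hs x k
      rwa [hsk, hπsk] at this
    have hcainv : ∀ x : G₁ × G₂,
        φ (x * (a⁻¹, 1)) = φ x * (b, 1) ∨ φ (x * (a⁻¹, 1)) = φ x * ((b, 1) : G₁ × G₂)⁻¹ := by
      intro x
      have h6 := hPOW s⁻¹ (hSmem s hs) x k
      rw [hπinv s hs, inv_pow, inv_pow, hsk, hπsk, inv_inv,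
        show ((a, 1) : G₁ × G₂)⁻¹ = ((a⁻¹, 1) : G₁ × G₂) by simp [Prod.ext_iff]] at h6
      exact h6.symm
    have hbne : b ≠ 1 := by
      intro hb1
      have h7 : (π s) ^ k = 1 := by
        rw [hπsk, hb1]
        rfl
      have h8 := hker s hs k h7
      rw [hsk] at h8
      exact ha1 (congrArg Prod.fst h8)
    have hbT : b ∈ T₁ := ⟨hbne, π s, hπbij.mapsTo hs, k, hπsk⟩
    have hsq : a * a = 1 → b * b = 1 := by
      intro haa
      have h7 : s ^ (2 * k) = 1 := by
        rw [two_mul, pow_add, hsk, Prod.mk_mul_mk, haa, mul_one]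
        rfl
      have h8 := hker' s hs (2 * k) h7
      rw [two_mul, pow_add, hπsk, Prod.mk_mul_mk, mul_one] at h8
      exact congrArg Prod.fst h8
    exact ⟨b, hbT, hca, hcainv, hsq, s, hs, k, hsk, hπsk⟩
  -- colours in the second factor do not move the first coordinate
  have hKEY2 : ∀ c ∈ T₂, ∀ x : G₁ × G₂, (φ (x * (1, c))).1 = (φ x).1 := by
    rintro c ⟨hc1, s, hs, k, hsk⟩ x
    have hs1k : s.1 ^ k = 1 := by
      have := congrArg Prod.fst hsk
      rwa [show (s ^ k).1 = s.1 ^ k from rfl] at this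
    have hordd : orderOf ((π s).1) ∣ k := by
      have hπk : (π s) ^ (orderOf s) = 1 := hker' s hs _ (pow_orderOf_eq_one s)
      have h1 : orderOf ((π s).1) ∣ orderOf s := by
        apply orderOf_dvd_of_pow_eq_one
        rw [show (π s).1 ^ orderOf s = ((π s) ^ orderOf s).1 from rfl, hπk]
        rfl
      have h2 : orderOf s ∣ orderOf s.1 * orderOf s.2 := by
        apply orderOf_dvd_of_pow_eq_one
        rw [Prod.ext_iff]
        constructor
        · rw [show (s ^ (orderOf s.1 * orderOf s.2)).1 = s.1 ^ (orderOf s.1 * orderOf s.2) from rfl,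
            pow_mul, pow_orderOf_eq_one, one_pow]
          rfl
        · rw [show (s ^ (orderOf s.1 * orderOf s.2)).2 = s.2 ^ (orderOf s.1 * orderOf s.2) from rfl,
            mul_comm, pow_mul, pow_orderOf_eq_one, one_pow]
          rfl
      have h3 : orderOf ((π s).1) ∣ orderOf s.1 * orderOf s.2 := h1.trans h2
      have h4 : Nat.Coprime (orderOf ((π s).1)) (orderOf s.2) :=
        Nat.Coprime.coprime_dvd_right (orderOf_dvd_natCard s.2)
          (Nat.Coprime.coprime_dvd_left (orderOf_dvd_natCard ((π s).1)) hco)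
      exact (Nat.Coprime.dvd_of_dvd_mul_right h4 h3).trans (orderOf_dvd_of_pow_eq_one hs1k)
    have hb1 : ((π s) ^ k).1 = 1 := by
      rw [show ((π s) ^ k).1 = (π s).1 ^ k from rfl]
      exact orderOf_dvd_iff_pow_eq_one.mp hordd
    have hπsk : (π s) ^ k = ((1, ((π s) ^ k).2) : G₁ × G₂) := by
      rw [Prod.ext_iff]
      exact ⟨hb1, rfl⟩
    have h6 := hPOW s hs x k
    rw [hsk, hπsk] at h6
    rcases h6 with h | h
    · rw [h, Prod.fst_mul, mul_one]
    · rw [h, Prod.fst_mul, show ((1, ((π s) ^ k).2) : G₁ × G₂)⁻¹.1 = (1 : G₁)⁻¹ from rfl,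
        inv_one, mul_one]
  -- the second coordinate of φ depends only on the second coordinate
  have hstep1 : ∀ a ∈ T₁, ∀ x : G₁ × G₂, (φ (x * (a, 1))).2 = (φ x).2 := by
    intro a ha x
    obtain ⟨b, _, hca, -, -, -⟩ := hKEY a ha
    rcases hca x with h | h
    · rw [h, Prod.snd_mul, mul_one]
    · rw [h, Prod.snd_mul, show ((b, 1) : G₁ × G₂)⁻¹.2 = (1 : G₂)⁻¹ from rfl, inv_one, mul_one]
  have hall1 : ∀ (a : G₁) (x : G₁ × G₂), (φ (x * (a, 1))).2 = (φ x).2 := by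
    intro a
    have haT : a ∈ Subgroup.closure T₁ := by
      rw [hcloT.1]
      exact Subgroup.mem_top a
    refine Subgroup.closure_induction
      (p := fun a _ => ∀ x : G₁ × G₂, (φ (x * (a, 1))).2 = (φ x).2) hstep1 ?_ ?_ ?_ haT
    · intro x
      rw [show ((1, 1) : G₁ × G₂) = 1 from rfl, mul_one]
    · intro u v _ _ hu hv x
      rw [show ((u * v, 1) : G₁ × G₂) = (u, 1) * (v, 1) by simp [Prod.ext_iff], ← mul_assoc,
        hv, hu]
    · intro u _ hu x
      have h9 := hu (x * (u⁻¹, 1))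
      rw [mul_assoc, show ((u⁻¹, 1) : G₁ × G₂) * (u, 1) = 1 by simp [Prod.ext_iff], mul_one] at h9
      exact h9.symm
  have hall2 : ∀ (c : G₂) (x : G₁ × G₂), (φ (x * (1, c))).1 = (φ x).1 := by
    intro c
    have hcT : c ∈ Subgroup.closure T₂ := by
      rw [hcloT.2]
      exact Subgroup.mem_top c
    refine Subgroup.closure_induction
      (p := fun c _ => ∀ x : G₁ × G₂, (φ (x * (1, c))).1 = (φ x).1) hKEY2 ?_ ?_ ?_ hcT
    · intro x
      rw [show ((1, 1) : G₁ × G₂) = 1 from rfl, mul_one]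
    · intro u v _ _ hu hv x
      rw [show ((1, u * v) : G₁ × G₂) = (1, u) * (1, v) by simp [Prod.ext_iff], ← mul_assoc,
        hv, hu]
    · intro u _ hu x
      have h9 := hu (x * (1, u⁻¹))
      rw [mul_assoc, show ((1, u⁻¹) : G₁ × G₂) * (1, u) = 1 by simp [Prod.ext_iff], mul_one] at h9
      exact h9.symm
  -- φ acts coordinatewise
  have hf0 : ∀ z : G₁ × G₂, (φ z).1 = (φ (z.1, 1)).1 := by
    intro z
    have := hall2 z.2 ((z.1, 1) : G₁ × G₂)
    rw [show ((z.1, 1) : G₁ × G₂) * (1, z.2) = z by simp [Prod.ext_iff]] at this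
    exact this
  have hg0 : ∀ z : G₁ × G₂, (φ z).2 = (φ (1, z.2)).2 := by
    intro z
    have := hall1 z.1 ((1, z.2) : G₁ × G₂)
    rw [show ((1, z.2) : G₁ × G₂) * (z.1, 1) = z by simp [Prod.ext_iff]] at this
    exact this
  have hbijf : Function.Bijective (fun x : G₁ => (φ (x, 1)).1) := by
    constructor
    · intro x x' hxx'
      have h1 : φ ((x, 1) : G₁ × G₂) = φ ((x', 1) : G₁ × G₂) := by
        rw [Prod.ext_iff]
        refine ⟨hxx', ?_⟩
        rw [hg0 ((x, 1) : G₁ × G₂), hg0 ((x', 1) : G₁ × G₂)]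
      have := hinj h1
      exact congrArg Prod.fst this
    · intro a
      refine ⟨(φ.symm (a, (φ ((1 : G₁), (1 : G₂))).2)).1, ?_⟩
      show (φ ((φ.symm (a, (φ ((1 : G₁), (1 : G₂))).2)).1, 1)).1 = a
      rw [← hf0 (φ.symm (a, (φ ((1 : G₁), (1 : G₂))).2)), Equiv.apply_symm_apply]
  refine ⟨T₁, Equiv.ofBijective _ hbijf, hT₁inv, hcloT.1, ?_, hKEY⟩
  intro z
  rw [hf0 z]
  rfl


lemma backward_fst_cp (hco : Nat.Coprime (Nat.card G₁) (Nat.card G₂)) (h₁ : IsCCA G₁)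
    (S : Set (G₁ × G₂)) (hS : S⁻¹ = S) (hgen : Subgroup.closure S = ⊤)
    (φ : Equiv.Perm (G₁ × G₂)) (hφ : ColourPreserving S ⇑φ) :
    ∃ (α₁ : G₁ ≃* G₁) (g₁ : G₁), ∀ z : G₁ × G₂, (φ z).1 = α₁ (g₁ * z.1) := by
  obtain ⟨T₁, f, hTinv, hTtop, hf, hkey⟩ :=
    core hco S hS hgen φ id (Set.bijOn_id S) (fun s _ => rfl) (fun x s hs => hφ x s hs)
  have hmk : ∀ (x a : G₁), ((x, 1) : G₁ × G₂) * (a, 1) = ((x * a, 1) : G₁ × G₂) := by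
    intro x a
    simp [Prod.ext_iff]
  have hfc : ColourPreserving T₁ ⇑f := by
    intro x a ha
    obtain ⟨b, hbT, hca, -, -, s, hsS, k, hsk, hπk⟩ := hkey a ha
    have hba : b = a := by
      have h1 : s ^ k = ((b, 1) : G₁ × G₂) := hπk
      rw [hsk] at h1
      exact (congrArg Prod.fst h1).symm
    subst hba
    rcases hca ((x, 1) : G₁ × G₂) with hc | hc
    · left
      have h2 := congrArg Prod.fst hc
      rw [hmk, hf ((x * b, 1) : G₁ × G₂), Prod.fst_mul, hf ((x, 1) : G₁ × G₂)] at h2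
      exact h2
    · right
      have h2 := congrArg Prod.fst hc
      rw [hmk, hf ((x * b, 1) : G₁ × G₂), Prod.fst_mul, hf ((x, 1) : G₁ × G₂),
        show ((b, 1) : G₁ × G₂)⁻¹.1 = b⁻¹ from rfl] at h2
      exact h2
  obtain ⟨α₁, g₁, haff⟩ := h₁ T₁ hTinv hTtop f hfc
  exact ⟨α₁, g₁, fun z => by rw [hf z, haff z.1]⟩

open Classical in
lemma backward_fst_perm (hco : Nat.Coprime (Nat.card G₁) (Nat.card G₂)) (h₁ : IsStronglyCCA G₁)
    (S : Set (G₁ × G₂)) (hS : S⁻¹ = S) (hgen : Subgroup.closure S = ⊤)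
    (φ : Equiv.Perm (G₁ × G₂)) (π : G₁ × G₂ → G₁ × G₂)
    (hπbij : Set.BijOn π S S) (hπinv : ∀ s ∈ S, π s⁻¹ = (π s)⁻¹)
    (hπcol : ∀ x : G₁ × G₂, ∀ s ∈ S, φ (x * s) = φ x * π s ∨ φ (x * s) = φ x * (π s)⁻¹) :
    ∃ (α₁ : G₁ ≃* G₁) (g₁ : G₁), ∀ z : G₁ × G₂, (φ z).1 = α₁ (g₁ * z.1) := by
  obtain ⟨T₁, f, hTinv, hTtop, hf, hkey⟩ := core hco S hS hgen φ π hπbij hπinv hπcol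
  have hmk : ∀ (x a : G₁), ((x, 1) : G₁ × G₂) * (a, 1) = ((x * a, 1) : G₁ × G₂) := by
    intro x a
    simp [Prod.ext_iff]
  have hTmem : ∀ a ∈ T₁, a⁻¹ ∈ T₁ := by
    intro a ha
    rw [← hTinv]
    simpa using ha
  -- colour data transported to `G₁`
  have hpair : ∀ a ∈ T₁, ∃ b ∈ T₁,
      (∀ x : G₁, f (x * a) = f x * b ∨ f (x * a) = f x * b⁻¹) ∧
      (∀ x : G₁, f (x * a⁻¹) = f x * b ∨ f (x * a⁻¹) = f x * b⁻¹) ∧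
      (a * a = 1 → b * b = 1) := by
    intro a ha
    obtain ⟨b, hbT, hca, hcainv, hsq, -⟩ := hkey a ha
    refine ⟨b, hbT, ?_, ?_, hsq⟩
    · intro x
      rcases hca ((x, 1) : G₁ × G₂) with hc | hc
      · left
        have h2 := congrArg Prod.fst hc
        rwa [hmk, hf ((x * a, 1) : G₁ × G₂), Prod.fst_mul, hf ((x, 1) : G₁ × G₂)] at h2
      · right
        have h2 := congrArg Prod.fst hc
        rwa [hmk, hf ((x * a, 1) : G₁ × G₂), Prod.fst_mul, hf ((x, 1) : G₁ × G₂),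
          show ((b, 1) : G₁ × G₂)⁻¹.1 = b⁻¹ from rfl] at h2
    · intro x
      rcases hcainv ((x, 1) : G₁ × G₂) with hc | hc
      · left
        have h2 := congrArg Prod.fst hc
        rwa [hmk, hf ((x * a⁻¹, 1) : G₁ × G₂), Prod.fst_mul, hf ((x, 1) : G₁ × G₂)] at h2
      · right
        have h2 := congrArg Prod.fst hc
        rwa [hmk, hf ((x * a⁻¹, 1) : G₁ × G₂), Prod.fst_mul, hf ((x, 1) : G₁ × G₂),
          show ((b, 1) : G₁ × G₂)⁻¹.1 = b⁻¹ from rfl] at h2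
  -- a canonical choice of orientation for each colour
  obtain ⟨ι, hι⟩ := Countable.exists_injective_nat G₁
  set ρ : G₁ → G₁ := fun a =>
    if ι a ≤ ι a⁻¹ then (f 1)⁻¹ * f a else ((f 1)⁻¹ * f a⁻¹)⁻¹ with hρdef
  have hρval : ∀ a, (ρ a = (f 1)⁻¹ * f a ∧ ι a ≤ ι a⁻¹) ∨
      (ρ a = ((f 1)⁻¹ * f a⁻¹)⁻¹ ∧ ¬ ι a ≤ ι a⁻¹) := by
    intro a
    by_cases h : ι a ≤ ι a⁻¹
    · left
      exact ⟨by rw [hρdef]; simp [h], h⟩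
    · right
      exact ⟨by rw [hρdef]; simp [h], h⟩
  -- ρ a lies in the pair {b, b⁻¹}
  have hρmem : ∀ a ∈ T₁, ∀ b ∈ T₁,
      (∀ x : G₁, f (x * a) = f x * b ∨ f (x * a) = f x * b⁻¹) →
      (∀ x : G₁, f (x * a⁻¹) = f x * b ∨ f (x * a⁻¹) = f x * b⁻¹) →
      ρ a = b ∨ ρ a = b⁻¹ := by
    intro a ha b hb hca hcainv
    have h1 : f a = f 1 * b ∨ f a = f 1 * b⁻¹ := by
      have := hca 1
      rwa [one_mul] at this
    have h2 : f a⁻¹ = f 1 * b ∨ f a⁻¹ = f 1 * b⁻¹ := by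
      have := hcainv 1
      rwa [one_mul] at this
    rcases hρval a with ⟨hv, -⟩ | ⟨hv, -⟩
    · rcases h1 with h | h
      · left
        rw [hv, h, ← mul_assoc, inv_mul_cancel, one_mul]
      · right
        rw [hv, h, ← mul_assoc, inv_mul_cancel, one_mul]
    · rcases h2 with h | h
      · right
        rw [hv, h, ← mul_assoc, inv_mul_cancel, one_mul]
      · left
        rw [hv, h, ← mul_assoc, inv_mul_cancel, one_mul, inv_inv]
  -- colour condition for ρ
  have hρcol : ∀ a ∈ T₁, ∀ x : G₁, f (x * a) = f x * ρ a ∨ f (x * a) = f x * (ρ a)⁻¹ := by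
    intro a ha x
    obtain ⟨b, hbT, hca, hcainv, -⟩ := hpair a ha
    rcases hρmem a ha b hbT hca hcainv with h | h
    · rw [h]
      exact hca x
    · rw [h, inv_inv]
      exact (hca x).symm
  -- values of f on colours
  have hfval : ∀ a ∈ T₁, f a = f 1 * ρ a ∨ f a = f 1 * (ρ a)⁻¹ := by
    intro a ha
    have := hρcol a ha 1
    rwa [one_mul] at this
  -- ρ maps T₁ to T₁
  have hρmaps : Set.MapsTo ρ T₁ T₁ := by
    intro a ha
    obtain ⟨b, hbT, hca, hcainv, -⟩ := hpair a ha
    rcases hρmem a ha b hbT hca hcainv with h | h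
    · rw [h]; exact hbT
    · rw [h]; exact hTmem b hbT
  -- compatibility with inverses
  have hρinv : ∀ a ∈ T₁, ρ a⁻¹ = (ρ a)⁻¹ := by
    intro a ha
    by_cases hself : a⁻¹ = a
    · obtain ⟨b, hbT, hca, hcainv, hsq⟩ := hpair a ha
      have haa : a * a = 1 := by
        nth_rewrite 1 [← hself]
        exact inv_mul_cancel a
      have hbb := hsq haa
      have hbinv : b⁻¹ = b := inv_eq_of_mul_eq_one_right hbb
      have hρself : ρ a * ρ a = 1 := by
        rcases hρmem a ha b hbT hca hcainv with h | h
        · rw [h]; exact hbb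
        · rw [h, hbinv]; exact hbb
      rw [hself, inv_eq_of_mul_eq_one_right hρself]
    · have hne : ι a ≠ ι a⁻¹ := fun h => hself (hι h).symm
      rcases hρval a with ⟨hv, hle⟩ | ⟨hv, hle⟩
      · have hle' : ¬ ι a⁻¹ ≤ ι (a⁻¹)⁻¹ := by
          rw [inv_inv]
          exact fun h => hne (le_antisymm hle h)
        rcases hρval a⁻¹ with ⟨-, hc⟩ | ⟨hw, -⟩
        · exact absurd hc hle'
        · rw [hw, inv_inv, hv]
      · have hle' : ι a⁻¹ ≤ ι (a⁻¹)⁻¹ := by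
          rw [inv_inv]
          exact le_of_not_ge hle
        rcases hρval a⁻¹ with ⟨hw, -⟩ | ⟨-, hc⟩
        · rw [hw, hv, inv_inv]
        · exact absurd hle' hc
  -- injectivity on T₁
  have hρinj : Set.InjOn ρ T₁ := by
    intro a ha a' ha' hρeq
    have h1 := hfval a ha
    have h2 := hfval a' ha'
    rw [← hρeq] at h2
    have hfinj : Function.Injective ⇑f := f.injective
    rcases h1 with h1 | h1 <;> rcases h2 with h2 | h2
    · exact hfinj (h1.trans h2.symm)
    · -- f a = f1 * c, f a' = f1 * c⁻¹
      by_cases hcc : (ρ a)⁻¹ = ρ a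
      · rw [hcc] at h2
        exact hfinj (h1.trans h2.symm)
      · obtain ⟨b, hbT, hca, hcainv, hsq⟩ := hpair a ha
        have h3 : f a⁻¹ = f 1 * ρ a ∨ f a⁻¹ = f 1 * (ρ a)⁻¹ := by
          have h4 := hcainv 1
          rw [one_mul] at h4
          rcases hρmem a ha b hbT hca hcainv with h | h
          · rw [← h] at h4
            exact h4
          · rcases h4 with h4 | h4
            · right
              rw [h4, h, inv_inv]
            · left
              rw [h4, h]
        rcases h3 with h3 | h3
        · -- f a⁻¹ = f a, so a has order two, contradiction with hcc
          have : a⁻¹ = a := hfinj (h3.trans h1.symm)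
          have haa : a * a = 1 := by
            nth_rewrite 1 [← this]
            exact inv_mul_cancel a
          have hbb := hsq haa
          have hρ2 : ρ a * ρ a = 1 := by
            rcases hρmem a ha b hbT hca hcainv with h | h
            · rw [h]; exact hbb
            · rw [h, inv_eq_of_mul_eq_one_right hbb]; exact hbb
          exact absurd (inv_eq_of_mul_eq_one_right hρ2) hcc
        · -- f a⁻¹ = f a', so a' = a⁻¹, whence ρ a' = (ρ a)⁻¹ = ρ a, contradiction
          have ha'eq : a⁻¹ = a' := hfinj (h3.trans h2.symm)
          have : ρ a' = (ρ a)⁻¹ := by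
            rw [← ha'eq, hρinv a ha]
          rw [← hρeq] at this
          exact absurd this.symm hcc
    · -- symmetric case
      by_cases hcc : (ρ a)⁻¹ = ρ a
      · rw [hcc] at h1
        exact hfinj (h1.trans h2.symm)
      · obtain ⟨b, hbT, hca, hcainv, hsq⟩ := hpair a' ha'
        have hρa' : ρ a' = ρ a := hρeq.symm ▸ rfl
        have hcaa : ∀ x : G₁, f (x * a') = f x * ρ a ∨ f (x * a') = f x * (ρ a)⁻¹ := by
          intro x
          have := hρcol a' ha' x
          rwa [← hρeq] at this
        have h3 : f a'⁻¹ = f 1 * ρ a ∨ f a'⁻¹ = f 1 * (ρ a)⁻¹ := by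
          have h4 := hcainv 1
          rw [one_mul] at h4
          rcases hρmem a' ha' b hbT hca hcainv with h | h
          · rw [← hρeq] at h
            rw [← h] at h4
            exact h4
          · rw [← hρeq] at h
            rcases h4 with h4 | h4
            · right
              rw [h4, h, inv_inv]
            · left
              rw [h4, h]
        rcases h3 with h3 | h3
        · have : a'⁻¹ = a' := hfinj (h3.trans h2.symm)
          have haa : a' * a' = 1 := by
            nth_rewrite 1 [← this]
            exact inv_mul_cancel a'
          have hbb := hsq haa
          have hρ2 : ρ a * ρ a = 1 := by
            rcases hρmem a' ha' b hbT hca hcainv with h | h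
            · rw [← hρeq] at h
              rw [h]; exact hbb
            · rw [← hρeq] at h
              rw [h, inv_eq_of_mul_eq_one_right hbb]; exact hbb
          exact absurd (inv_eq_of_mul_eq_one_right hρ2) hcc
        · have ha'eq : a'⁻¹ = a := hfinj (h3.trans h1.symm)
          have : ρ a = (ρ a')⁻¹ := by
            rw [← ha'eq, hρinv a' ha']
          rw [← hρeq] at this
          exact absurd this.symm hcc
    · have : f 1 * (ρ a)⁻¹ = f 1 * (ρ a)⁻¹ := rfl
      exact hfinj (h1.trans h2.symm)
  have hρbij : Set.BijOn ρ T₁ T₁ :=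
    ((Set.Finite.injOn_iff_bijOn_of_mapsTo (Set.toFinite T₁) hρmaps).mp hρinj)
  have hfperm : ColourPermuting T₁ ⇑f := ⟨ρ, hρbij, hρinv, fun x a ha => hρcol a ha x⟩
  obtain ⟨α₁, g₁, haff⟩ := h₁ T₁ hTinv hTtop f hfperm
  exact ⟨α₁, g₁, fun z => by rw [hf z, haff z.1]⟩

end Backward

section Final
variable {G₁ G₂ : Type*} [Group G₁] [Group G₂] [Finite G₁] [Finite G₂]

lemma isCCA_prod (hco : Nat.Coprime (Nat.card G₁) (Nat.card G₂))
    (h₁ : IsCCA G₁) (h₂ : IsCCA G₂) : IsCCA (G₁ × G₂) := by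
  intro S hS hgen φ hφ
  obtain ⟨α₁, g₁, hc1⟩ := backward_fst_cp hco h₁ S hS hgen φ hφ
  set e : (G₂ × G₁) ≃* (G₁ × G₂) := MulEquiv.prodComm with hedef
  set ψ : Equiv.Perm (G₂ × G₁) := (e.toEquiv.trans φ).trans e.symm.toEquiv with hψdef
  obtain ⟨α₂, g₂, hc2⟩ := backward_fst_cp hco.symm h₂ (⇑e.symm '' S)
    (symm_image_inv_closed e hS) (symm_image_closure_top e hgen) ψ (transport_cp e φ hφ)
  refine ⟨MulEquiv.prodCongr α₁ α₂, (g₁, g₂), fun z => ?_⟩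
  have h2 : (φ z).2 = α₂ (g₂ * z.2) := by
    have h3 := hc2 ((z.2, z.1) : G₂ × G₁)
    have h4 : (ψ ((z.2, z.1) : G₂ × G₁)).1 = (φ z).2 := rfl
    rw [h4] at h3
    exact h3
  have hmul : ((g₁, g₂) : G₁ × G₂) * z = ((g₁ * z.1, g₂ * z.2) : G₁ × G₂) := by
    simp [Prod.ext_iff]
  rw [hmul, Prod.ext_iff]
  exact ⟨hc1 z, h2⟩

lemma isStronglyCCA_prod (hco : Nat.Coprime (Nat.card G₁) (Nat.card G₂))
    (h₁ : IsStronglyCCA G₁) (h₂ : IsStronglyCCA G₂) : IsStronglyCCA (G₁ × G₂) := by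
  intro S hS hgen φ hφ
  obtain ⟨π, hπbij, hπinv, hπcol⟩ := hφ
  obtain ⟨α₁, g₁, hc1⟩ := backward_fst_perm hco h₁ S hS hgen φ π hπbij hπinv hπcol
  set e : (G₂ × G₁) ≃* (G₁ × G₂) := MulEquiv.prodComm with hedef
  set ψ : Equiv.Perm (G₂ × G₁) := (e.toEquiv.trans φ).trans e.symm.toEquiv with hψdef
  obtain ⟨π', hπ'bij, hπ'inv, hπ'col⟩ := transport_cperm e φ ⟨π, hπbij, hπinv, hπcol⟩
  obtain ⟨α₂, g₂, hc2⟩ := backward_fst_perm hco.symm h₂ (⇑e.symm '' S)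
    (symm_image_inv_closed e hS) (symm_image_closure_top e hgen) ψ π' hπ'bij hπ'inv hπ'col
  refine ⟨MulEquiv.prodCongr α₁ α₂, (g₁, g₂), fun z => ?_⟩
  have h2 : (φ z).2 = α₂ (g₂ * z.2) := by
    have h3 := hc2 ((z.2, z.1) : G₂ × G₁)
    have h4 : (ψ ((z.2, z.1) : G₂ × G₁)).1 = (φ z).2 := rfl
    rw [h4] at h3
    exact h3
  have hmul : ((g₁, g₂) : G₁ × G₂) * z = ((g₁ * z.1, g₂ * z.2) : G₁ × G₂) := by
    simp [Prod.ext_iff]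
  rw [hmul, Prod.ext_iff]
  exact ⟨hc1 z, h2⟩
end Final

/-- For groups of coprime orders, `G₁ × G₂` is (strongly) CCA iff both factors are. -/
theorem stmt_11 {G₁ G₂ : Type*} [Group G₁] [Group G₂] [Finite G₁] [Finite G₂]
    (hco : Nat.Coprime (Nat.card G₁) (Nat.card G₂)) :
    (IsCCA (G₁ × G₂) ↔ IsCCA G₁ ∧ IsCCA G₂) ∧
    (IsStronglyCCA (G₁ × G₂) ↔ IsStronglyCCA G₁ ∧ IsStronglyCCA G₂) := by
  constructor
  · constructor
    · intro h
      exact ⟨isCCA_fst hco h,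
        isCCA_fst hco.symm (isCCA_of_mulEquiv (MulEquiv.prodComm : (G₁ × G₂) ≃* (G₂ × G₁)) h)⟩
    · rintro ⟨h1, h2⟩
      exact isCCA_prod hco h1 h2
  · constructor
    · intro h
      exact ⟨isStronglyCCA_fst hco h, isStronglyCCA_fst hco.symm
        (isStronglyCCA_of_mulEquiv (MulEquiv.prodComm : (G₁ × G₂) ≃* (G₂ × G₁)) h)⟩
    · rintro ⟨h1, h2⟩
      exact isStronglyCCA_prod hco h1 h2
end

section
/- For every k ≥ 2, the abelian group ℤ_{2^k} × ℤ₂ × ℤ₂ is not CCA. -/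
namespace Stmt13

abbrev A (m : ℕ) := ZMod (2 ^ (m + 2)) × ZMod 2 × ZMod 2

def r (m : ℕ) : ZMod (2 ^ (m + 2)) →+* ZMod 2 :=
  ZMod.castHom (show (2:ℕ) ∣ 2 ^ (m + 2) from dvd_pow_self 2 (by omega)) (ZMod 2)

def χ (m : ℕ) (g : A m) : ZMod 2 := (g.2.1 + r m g.1) * (g.2.2 + r m g.1)

def dd (m : ℕ) : A m := (((2 ^ (m + 1) : ℕ) : ZMod (2 ^ (m + 2))), 0, 0)

def φA (m : ℕ) (g : A m) : A m := g + (χ m g).val • dd m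

def tA (m : ℕ) : A m := (1, 1, 1)
def s0A (m : ℕ) : A m := (((2 ^ m : ℕ) : ZMod (2 ^ (m + 2))), 1, 0)
def s1A (m : ℕ) : A m := (((2 ^ m : ℕ) : ZMod (2 ^ (m + 2))), 0, 1)
def aA (m : ℕ) : A m := (1, 0, 0)
def bA (m : ℕ) : A m := (0, 1, 0)
def cA (m : ℕ) : A m := (0, 0, 1)
def eA (m : ℕ) : A m := (0, 1, 1)

lemma r_pow (m j : ℕ) (hj : 1 ≤ j) : r m ((2 ^ j : ℕ) : ZMod (2 ^ (m + 2))) = 0 := by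
  rw [map_natCast]
  exact (ZMod.natCast_eq_zero_iff _ _).2 (dvd_pow_self 2 (by omega))

lemma cast_two_pow_add (m : ℕ) :
    ((2 ^ (m+1) : ℕ) : ZMod (2 ^ (m + 2))) + ((2 ^ (m+1) : ℕ) : ZMod (2 ^ (m + 2))) = 0 := by
  rw [← Nat.cast_add]
  exact (ZMod.natCast_eq_zero_iff _ _).2 ⟨1, by ring⟩

lemma cast_pow_m_add (m : ℕ) :
    ((2 ^ m : ℕ) : ZMod (2 ^ (m + 2))) + ((2 ^ m : ℕ) : ZMod (2 ^ (m + 2)))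
      = ((2 ^ (m+1) : ℕ) : ZMod (2 ^ (m + 2))) := by
  rw [← Nat.cast_add]
  congr 1
  omega

lemma dd_add_dd (m : ℕ) : dd m + dd m = 0 := by
  simp only [dd, Prod.mk_add_mk, cast_two_pow_add, add_zero]
  rfl

lemma dd_ne_zero (m : ℕ) : dd m ≠ 0 := by
  intro h
  have h1 : ((2 ^ (m+1) : ℕ) : ZMod (2 ^ (m + 2))) = 0 := congrArg Prod.fst h
  rw [ZMod.natCast_eq_zero_iff] at h1
  have h2 := Nat.le_of_dvd (by positivity) h1
  have h3 : (2:ℕ) ^ (m+1) < 2 ^ (m+2) := Nat.pow_lt_pow_right (by norm_num) (by omega)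
  omega

lemma s0_add_s0 (m : ℕ) : s0A m + s0A m = dd m := by
  simp only [s0A, dd, Prod.mk_add_mk, cast_pow_m_add, add_zero]
  exact Prod.ext_iff.mpr ⟨rfl, (by decide : ((1+1 : ZMod 2), (0+0:ZMod 2)) = ((0:ZMod 2),(0:ZMod 2)))⟩

lemma s1_add_s1 (m : ℕ) : s1A m + s1A m = dd m := by
  simp only [s1A, dd, Prod.mk_add_mk, cast_pow_m_add, add_zero]
  exact Prod.ext_iff.mpr ⟨rfl, (by decide : ((0+0 : ZMod 2), (1+1:ZMod 2)) = ((0:ZMod 2),(0:ZMod 2)))⟩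

lemma neg_s_add (m : ℕ) {s : A m} (h : s + s = dd m) : (-s) + (-s) = dd m := by
  have hd := dd_add_dd m
  have h2 : -(s + s) = dd m := by
    rw [h, neg_eq_iff_add_eq_zero]
    exact hd
  rw [← h2]; abel

lemma χ_shift (m : ℕ) (g h : A m) (h1 : h.2.1 + r m h.1 = 0) (h2 : h.2.2 + r m h.1 = 0) :
    χ m (g + h) = χ m g := by
  simp only [χ, Prod.fst_add, Prod.snd_add, map_add]
  rw [show g.2.1 + h.2.1 + (r m g.1 + r m h.1) = (g.2.1 + r m g.1) + (h.2.1 + r m h.1) by ring, h1,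
     show g.2.2 + h.2.2 + (r m g.1 + r m h.1) = (g.2.2 + r m g.1) + (h.2.2 + r m h.1) by ring, h2,
     add_zero, add_zero]

lemma χ_add_nsmul_dd (m : ℕ) (g : A m) (n : ℕ) : χ m (g + n • dd m) = χ m g := by
  have h1 : r m ((n • dd m).1) = 0 := by
    show r m (n • ((2 ^ (m+1) : ℕ) : ZMod (2 ^ (m + 2)))) = 0
    rw [map_nsmul, r_pow m (m+1) (by omega), smul_zero]
  refine χ_shift m g _ ?_ ?_ <;>
    · rw [h1]
      show (n • (0:ZMod 2)) + 0 = 0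
      rw [smul_zero, add_zero]

lemma χ_add_t (m : ℕ) (g : A m) : χ m (g + tA m) = χ m g := by
  refine χ_shift m g _ ?_ ?_ <;>
    · show (1 : ZMod 2) + r m 1 = 0
      rw [map_one]; decide

lemma χ_add_negt (m : ℕ) (g : A m) : χ m (g + -tA m) = χ m g := by
  refine χ_shift m g _ ?_ ?_ <;>
    · show (-1 : ZMod 2) + r m (-1) = 0
      rw [map_neg, map_one]; decide

lemma zmod2_cases (c : ZMod 2) : c = 0 ∨ c = 1 := by revert c; decide

lemma colour_key (m : ℕ) {s : A m} (hs : s + s = dd m) (g : A m) :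
    φA m (g + s) = φA m g + s ∨ φA m (g + s) = φA m g + -s := by
  have hdd := dd_add_dd m
  have hv0 : (0 : ZMod 2).val = 0 := rfl
  have hv1 : (1 : ZMod 2).val = 1 := rfl
  simp only [φA]
  rcases zmod2_cases (χ m (g + s)) with h1 | h1 <;> rcases zmod2_cases (χ m g) with h2 | h2
  · left; rw [h1, h2]
    simp only [hv0, zero_smul, add_zero]
  · right; rw [h1, h2]
    simp only [hv0, hv1, zero_smul, one_smul, add_zero]
    rw [← hs]; abel
  · right; rw [h1, h2]
    simp only [hv0, hv1, zero_smul, one_smul, add_zero]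
    rw [← sub_eq_zero, show g + s + dd m - (g + -s) = (s + s) + dd m by abel, hs, hdd]
  · left; rw [h1, h2]
    simp only [hv1, one_smul]
    abel

lemma φ_t (m : ℕ) (g : A m) : φA m (g + tA m) = φA m g + tA m := by
  simp only [φA, χ_add_t]
  abel

lemma φ_negt (m : ℕ) (g : A m) : φA m (g + -tA m) = φA m g + -tA m := by
  simp only [φA, χ_add_negt]
  abel

lemma φφ (m : ℕ) (g : A m) : φA m (φA m g) = g := by
  simp only [φA, χ_add_nsmul_dd, add_assoc, ← smul_add, dd_add_dd, smul_zero, add_zero]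

lemma hsub1 (m : ℕ) : s0A m - s1A m = eA m := by
  refine Prod.ext_iff.mpr ⟨?_, ?_⟩
  · show ((2 ^ m : ℕ) : ZMod (2 ^ (m + 2))) - ((2 ^ m : ℕ) : ZMod (2 ^ (m + 2))) = 0
    rw [sub_self]
  · show ((1,0) : ZMod 2 × ZMod 2) - (0,1) = (1,1)
    decide

lemma hsub2 (m : ℕ) : tA m - eA m = aA m := by
  refine Prod.ext_iff.mpr ⟨?_, ?_⟩
  · show (1 : ZMod (2 ^ (m + 2))) - 0 = 1
    rw [sub_zero]
  · show ((1,1) : ZMod 2 × ZMod 2) - (1,1) = (0,0)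
    decide

lemma hsub3 (m : ℕ) : s0A m - (2 ^ m) • aA m = bA m := by
  refine Prod.ext_iff.mpr ⟨?_, ?_⟩
  · show ((2 ^ m : ℕ) : ZMod (2 ^ (m + 2))) - (2 ^ m) • (1 : ZMod (2 ^ (m + 2))) = 0
    rw [nsmul_eq_mul, mul_one, sub_self]
  · show ((1,0) : ZMod 2 × ZMod 2) - (2 ^ m) • (0, 0) = (1,0)
    rw [show ((0,0) : ZMod 2 × ZMod 2) = 0 from rfl, smul_zero, sub_zero]

lemma hsub4 (m : ℕ) : eA m - bA m = cA m := by
  refine Prod.ext_iff.mpr ⟨?_, ?_⟩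
  · show (0 : ZMod (2 ^ (m + 2))) - 0 = 0
    rw [sub_zero]
  · show ((1,1) : ZMod 2 × ZMod 2) - (1,0) = (0,1)
    decide

lemma decomp (m : ℕ) (g : A m) :
    g = g.1.val • aA m + g.2.1.val • bA m + g.2.2.val • cA m := by
  haveI : NeZero (2 ^ (m + 2)) := ⟨by positivity⟩
  refine Prod.ext_iff.mpr ⟨?_, Prod.ext_iff.mpr ⟨?_, ?_⟩⟩
  · show g.1 = g.1.val • (1 : ZMod (2^(m+2))) + g.2.1.val • (0:ZMod (2^(m+2))) + g.2.2.val • 0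
    rw [smul_zero, smul_zero, add_zero, add_zero, nsmul_eq_mul, mul_one, ZMod.natCast_val,
      ZMod.cast_id]
  · show g.2.1 = g.1.val • (0 : ZMod 2) + g.2.1.val • (1 : ZMod 2) + g.2.2.val • 0
    rw [smul_zero, smul_zero, add_zero, zero_add, nsmul_eq_mul, mul_one, ZMod.natCast_val,
      ZMod.cast_id]
  · show g.2.2 = g.1.val • (0 : ZMod 2) + g.2.1.val • (0 : ZMod 2) + g.2.2.val • 1
    rw [smul_zero, smul_zero, add_zero, zero_add, nsmul_eq_mul, mul_one, ZMod.natCast_val,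
      ZMod.cast_id]

lemma χ_zero (m : ℕ) : χ m 0 = 0 := by
  show ((0:ZMod 2) + r m 0) * ((0:ZMod 2) + r m 0) = 0
  rw [map_zero]; ring

lemma χ_b (m : ℕ) : χ m (bA m) = 0 := by
  show ((1:ZMod 2) + r m 0) * ((0:ZMod 2) + r m 0) = 0
  rw [map_zero]; ring

lemma χ_c (m : ℕ) : χ m (cA m) = 0 := by
  show ((0:ZMod 2) + r m 0) * ((1:ZMod 2) + r m 0) = 0
  rw [map_zero]; ring

lemma χ_e (m : ℕ) : χ m (eA m) = 1 := by
  show ((1:ZMod 2) + r m 0) * ((1:ZMod 2) + r m 0) = 1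
  rw [map_zero]; ring

lemma b_add_c (m : ℕ) : bA m + cA m = eA m := by
  refine Prod.ext_iff.mpr ⟨?_, ?_⟩
  · show (0 : ZMod (2^(m+2))) + 0 = 0
    rw [add_zero]
  · show ((1,0) : ZMod 2 × ZMod 2) + (0,1) = (1,1)
    decide

lemma φ_zero (m : ℕ) : φA m 0 = 0 := by
  rw [φA, χ_zero]
  show (0 : A m) + 0 • dd m = 0
  rw [zero_smul, add_zero]

lemma φ_b (m : ℕ) : φA m (bA m) = bA m := by
  rw [φA, χ_b]
  show bA m + 0 • dd m = bA m
  rw [zero_smul, add_zero]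

lemma φ_c (m : ℕ) : φA m (cA m) = cA m := by
  rw [φA, χ_c]
  show cA m + 0 • dd m = cA m
  rw [zero_smul, add_zero]

lemma φ_bc (m : ℕ) : φA m (bA m + cA m) = bA m + cA m + dd m := by
  rw [φA, b_add_c, χ_e]
  show eA m + 1 • dd m = eA m + dd m
  rw [one_smul]

open Multiplicative

def G (m : ℕ) := Multiplicative (A m)

noncomputable instance (m : ℕ) : Group (G m) := by unfold G; infer_instance

def φM (m : ℕ) : Equiv.Perm (Multiplicative (A m)) where
  toFun g := ofAdd (φA m g.toAdd)
  invFun g := ofAdd (φA m g.toAdd)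
  left_inv g := by
    show ofAdd (φA m (toAdd (ofAdd (φA m (toAdd g))))) = g
    rw [toAdd_ofAdd, φφ, ofAdd_toAdd]
  right_inv g := by
    show ofAdd (φA m (toAdd (ofAdd (φA m (toAdd g))))) = g
    rw [toAdd_ofAdd, φφ, ofAdd_toAdd]

end Stmt13

open Stmt13 Multiplicative

/-- For every `k ≥ 2`, the abelian group `ℤ_{2^k} × ℤ₂ × ℤ₂` is not CCA. -/
theorem stmt_13 (k : ℕ) (hk : 2 ≤ k) :
    ¬ IsCCA (Multiplicative (ZMod (2 ^ k) × ZMod 2 × ZMod 2)) := by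
  obtain ⟨m, rfl⟩ : ∃ m, k = m + 2 := ⟨k - 2, by omega⟩
  intro hCCA
  set t : Multiplicative (A m) := ofAdd (tA m) with ht_def
  set s0 : Multiplicative (A m) := ofAdd (s0A m) with hs0_def
  set s1 : Multiplicative (A m) := ofAdd (s1A m) with hs1_def
  set S : Set (Multiplicative (A m)) := {t, t⁻¹, s0, s0⁻¹, s1, s1⁻¹} with hS_def
  -- symmetry
  have hSinv : S⁻¹ = S := by
    ext x
    simp only [hS_def, Set.mem_inv, Set.mem_insert_iff, Set.mem_singleton_iff,
      inv_eq_iff_eq_inv, inv_inv]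
    tauto
  -- generation
  have hSgen : Subgroup.closure S = ⊤ := by
    rw [Subgroup.eq_top_iff']
    intro g
    have ht : t ∈ Subgroup.closure S := Subgroup.subset_closure (by simp [hS_def])
    have hs0 : s0 ∈ Subgroup.closure S := Subgroup.subset_closure (by simp [hS_def])
    have hs1 : s1 ∈ Subgroup.closure S := Subgroup.subset_closure (by simp [hS_def])
    have he : ofAdd (eA m) ∈ Subgroup.closure S := by
      rw [← hsub1, ofAdd_sub]
      exact div_mem hs0 hs1
    have ha : ofAdd (aA m) ∈ Subgroup.closure S := by
      rw [← hsub2, ofAdd_sub]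
      exact div_mem ht he
    have hb : ofAdd (bA m) ∈ Subgroup.closure S := by
      rw [← hsub3, ofAdd_sub, ofAdd_nsmul]
      exact div_mem hs0 (pow_mem ha _)
    have hc : ofAdd (cA m) ∈ Subgroup.closure S := by
      rw [← hsub4, ofAdd_sub]
      exact div_mem he hb
    have hg : g = (ofAdd (aA m)) ^ (toAdd g).1.val * (ofAdd (bA m)) ^ (toAdd g).2.1.val *
        (ofAdd (cA m)) ^ (toAdd g).2.2.val := by
      rw [← ofAdd_nsmul, ← ofAdd_nsmul, ← ofAdd_nsmul, ← ofAdd_add, ← ofAdd_add, ← decomp]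
      exact (ofAdd_toAdd g).symm
    rw [hg]
    exact mul_mem (mul_mem (pow_mem ha _) (pow_mem hb _)) (pow_mem hc _)
  -- colour preserving
  have hCP : ColourPreserving S ⇑(φM m) := by
    intro x s hs
    simp only [hS_def, Set.mem_insert_iff, Set.mem_singleton_iff] at hs
    rcases hs with rfl | rfl | rfl | rfl | rfl | rfl
    · exact Or.inl (congrArg ofAdd (φ_t m (toAdd x)))
    · exact Or.inl (congrArg ofAdd (φ_negt m (toAdd x)))
    · rcases colour_key m (s0_add_s0 m) (toAdd x) with h | h
      · exact Or.inl (congrArg ofAdd h)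
      · exact Or.inr (congrArg ofAdd h)
    · rcases colour_key m (neg_s_add m (s0_add_s0 m)) (toAdd x) with h | h
      · exact Or.inl (congrArg ofAdd h)
      · rw [neg_neg] at h
        right
        rw [inv_inv]
        exact congrArg ofAdd h
    · rcases colour_key m (s1_add_s1 m) (toAdd x) with h | h
      · exact Or.inl (congrArg ofAdd h)
      · exact Or.inr (congrArg ofAdd h)
    · rcases colour_key m (neg_s_add m (s1_add_s1 m)) (toAdd x) with h | h
      · exact Or.inl (congrArg ofAdd h)
      · rw [neg_neg] at h
        right
        rw [inv_inv]
        exact congrArg ofAdd h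
  -- apply CCA
  obtain ⟨α, g0, hα⟩ := hCCA S hSinv hSgen (φM m) hCP
  -- φM fixes 1
  have h1 : (φM m) (1 : Multiplicative (A m)) = 1 := congrArg ofAdd (φ_zero m)
  have hg0 : g0 = 1 := by
    have := hα 1
    rw [h1, mul_one] at this
    exact α.injective (by rw [← this, map_one])
  have hφα : ∀ x, (φM m) x = α x := by
    intro x
    rw [hα x, hg0, one_mul]
  -- contradiction via non-multiplicativity
  have hb' : (φM m) (ofAdd (bA m)) = ofAdd (bA m) := congrArg ofAdd (φ_b m)
  have hc' : (φM m) (ofAdd (cA m)) = ofAdd (cA m) := congrArg ofAdd (φ_c m)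
  have hbc : (φM m) (ofAdd (bA m) * ofAdd (cA m)) = ofAdd (bA m + cA m + dd m) := by
    rw [← ofAdd_add]
    exact congrArg ofAdd (φ_bc m)
  have hmul : α (ofAdd (bA m) * ofAdd (cA m)) = α (ofAdd (bA m)) * α (ofAdd (cA m)) :=
    map_mul α _ _
  rw [← hφα, ← hφα, ← hφα, hb', hc', hbc, ← ofAdd_add] at hmul
  have : bA m + cA m + dd m = bA m + cA m := ofAdd.injective hmul
  nth_rewrite 2 [← add_zero (bA m + cA m)] at this
  exact dd_ne_zero m (add_left_cancel this)
end

section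
/- No generalized dicyclic group Dic(A,y) is CCA except ℤ₄. That is, if A is a finite abelian group of even order with an involution y, and Dic(A,y) = ⟨x, A | x² = y, x⁻¹ax = a⁻¹ for all a ∈ A⟩ is not isomorphic to ℤ₄, then Dic(A,y) is not CCA. -/
/-- No generalized dicyclic group is CCA except `ℤ₄`: if `G` has an abelian subgroup `A`
of index 2 and an element `x ∉ A` with `x² ∈ A`, `x² ≠ 1`, and `x⁻¹ax = a⁻¹` for all
`a ∈ A` (so `G = Dic(A, x²)`), and `G ≇ ℤ₄`, then `G` is not CCA. -/
theorem stmt_14 {G : Type*} [Group G] [Finite G] (A : Subgroup G) (x : G)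
    (hA : ∀ a b : A, a * b = b * a) (hidx : A.index = 2) (hx : x ∉ A)
    (hx2A : x ^ 2 ∈ A) (hx2 : x ^ 2 ≠ 1)
    (hinv : ∀ a ∈ A, x⁻¹ * a * x = a⁻¹)
    (hnot4 : ¬ Nonempty (G ≃* Multiplicative (ZMod 4))) :
    ¬ IsCCA G := by
  classical
  intro hCCA
  -- `x ^ 2` is an involution
  have hyy : x ^ 2 * x ^ 2 = 1 := by
    have h := hinv (x ^ 2) hx2A
    have h1 : x⁻¹ * x ^ 2 * x = x ^ 2 := by simp [pow_two, mul_assoc]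
    rw [h1] at h
    calc x ^ 2 * x ^ 2 = x ^ 2 * (x ^ 2)⁻¹ := congrArg (x ^ 2 * ·) h
      _ = 1 := mul_inv_cancel _
  -- every element outside A is x * a with a ∈ A
  have hmem : ∀ s : G, s ∉ A → x⁻¹ * s ∈ A := by
    intro s hs
    rw [Subgroup.mul_mem_iff_of_index_two hidx]
    exact iff_of_false (fun h => hx ((inv_mem_iff).mp h)) hs
  have hax : ∀ a ∈ A, a * x = x * a⁻¹ := by
    intro a ha
    have h := hinv a ha
    calc a * x = x * (x⁻¹ * a * x) := by simp [mul_assoc]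
      _ = x * a⁻¹ := by rw [h]
  -- squares of elements outside A
  have hss : ∀ s : G, s ∉ A → s * s = x ^ 2 := by
    intro s hs
    have ha := hmem s hs
    calc s * s = x * ((x⁻¹ * s) * x) * (x⁻¹ * s) := by simp [mul_assoc]
      _ = x * (x * (x⁻¹ * s)⁻¹) * (x⁻¹ * s) := by rw [hax _ ha]
      _ = x ^ 2 := by simp [pow_two, mul_assoc]
  -- x^2 commutes with everything outside A
  have hsy : ∀ s : G, s ∉ A → x ^ 2 * s = s * x ^ 2 := by
    intro s hs
    have ha := hmem s hs
    have ha' : (x⁻¹ * s)⁻¹ ∈ A := inv_mem ha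
    have key : s * x ^ 2 = x ^ 2 * s :=
      calc s * x ^ 2 = x * ((x⁻¹ * s) * x) * x := by simp [pow_two, mul_assoc]
        _ = x * (x * (x⁻¹ * s)⁻¹) * x := by rw [hax _ ha]
        _ = x * x * ((x⁻¹ * s)⁻¹ * x) := by simp [mul_assoc]
        _ = x * x * (x * ((x⁻¹ * s)⁻¹)⁻¹) := by rw [hax _ ha']
        _ = x ^ 2 * s := by simp [pow_two, mul_assoc]
    exact key.symm
  have hsinv : ∀ s : G, s ∉ A → s⁻¹ = s * x ^ 2 := by
    intro s hs
    refine inv_eq_of_mul_eq_one_right ?_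
    calc s * (s * x ^ 2) = (s * s) * x ^ 2 := by simp [mul_assoc]
      _ = x ^ 2 * x ^ 2 := by rw [hss s hs]
      _ = 1 := hyy
  -- the connection set: the nontrivial coset of A
  set S : Set G := {g : G | g ∉ A} with hSdef
  have hS1 : S⁻¹ = S := by
    ext g
    simp only [hSdef, Set.mem_inv, Set.mem_setOf_eq, inv_mem_iff (H := A)]
  have hS2 : Subgroup.closure S = ⊤ := by
    rw [Subgroup.eq_top_iff']
    intro g
    by_cases hg : g ∈ A
    · have hxg : x * g ∉ A := fun h => hx (by simpa using mul_mem h (inv_mem hg))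
      have : g = x⁻¹ * (x * g) := by simp [mul_assoc]
      rw [this]
      exact mul_mem (inv_mem (Subgroup.subset_closure hx))
        (Subgroup.subset_closure hxg)
    · exact Subgroup.subset_closure hg
  -- basic non-membership facts
  have hxyA : x * x ^ 2 ∉ A := fun h => hx (by simpa using mul_mem h (inv_mem hx2A))
  have hxne : x ≠ x * x ^ 2 := fun h =>
    hx2 (mul_left_cancel (show x * (1 : G) = x * x ^ 2 by rw [mul_one]; exact h)).symm
  -- the colour-preserving permutation: swap x and x * x^2
  set φ : Equiv.Perm G := Equiv.swap x (x * x ^ 2) with hφdef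
  have hφ : ∀ g : G, φ g = g ∨ φ g = g * x ^ 2 := by
    intro g
    by_cases h1 : g = x
    · right; rw [hφdef, h1, Equiv.swap_apply_left]
    · by_cases h2 : g = x * x ^ 2
      · right
        rw [hφdef, h2, Equiv.swap_apply_right]
        calc x = x * (x ^ 2 * x ^ 2) := by rw [hyy, mul_one]
          _ = x * x ^ 2 * x ^ 2 := by simp [mul_assoc]
      · left; rw [hφdef]; exact Equiv.swap_apply_of_ne_of_ne h1 h2
  have hcp : ColourPreserving S ⇑φ := by
    intro g s hs
    have hs : s ∉ A := hs
    rcases hφ (g * s) with h1 | h1 <;> rcases hφ g with h2 | h2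
    · left; rw [h1, h2]
    · right
      rw [h1, h2, hsinv s hs]
      calc g * s = g * (s * (x ^ 2 * x ^ 2)) := by rw [hyy, mul_one]
        _ = g * (s * x ^ 2) * x ^ 2 := by simp [mul_assoc]
        _ = g * (x ^ 2 * s) * x ^ 2 := by rw [← hsy s hs]
        _ = g * x ^ 2 * (s * x ^ 2) := by simp [mul_assoc]
    · right
      rw [h1, h2, hsinv s hs]
      simp [mul_assoc]
    · left
      rw [h1, h2]
      calc g * s * x ^ 2 = g * (s * x ^ 2) := by simp [mul_assoc]
        _ = g * (x ^ 2 * s) := by rw [← hsy s hs]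
        _ = g * x ^ 2 * s := by simp [mul_assoc]
  -- apply the CCA hypothesis
  obtain ⟨α, g₀, hαg⟩ := hCCA S hS1 hS2 φ hcp
  have h1x : (1 : G) ≠ x := fun h => hx (h ▸ A.one_mem)
  have h1xy : (1 : G) ≠ x * x ^ 2 := fun h => hxyA (h ▸ A.one_mem)
  have hφ1 : φ 1 = 1 := by rw [hφdef]; exact Equiv.swap_apply_of_ne_of_ne h1x h1xy
  have hg₀ : g₀ = 1 := by
    apply α.injective
    rw [map_one]
    have := hαg 1
    rw [hφ1, mul_one] at this
    exact this.symm
  have hα : ∀ v : G, φ v = α v := by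
    intro v
    have := hαg v
    rwa [hg₀, one_mul] at this
  -- main case : A has an element other than 1 and x^2
  by_cases hU : ∃ u ∈ A, u ≠ 1 ∧ u ≠ x ^ 2
  · obtain ⟨u, huA, hu1, huy⟩ := hU
    have hux : u ≠ x := fun h => hx (h ▸ huA)
    have huxy : u ≠ x * x ^ 2 := fun h => hxyA (h ▸ huA)
    have hu : φ u = u := by rw [hφdef]; exact Equiv.swap_apply_of_ne_of_ne hux huxy
    have hv1 : u⁻¹ * x ≠ x := by
      intro h
      apply hu1
      have h1 : u⁻¹ = 1 :=
        mul_right_cancel (show u⁻¹ * x = 1 * x by rw [one_mul]; exact h)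
      exact inv_eq_one.mp h1
    have hv2 : u⁻¹ * x ≠ x * x ^ 2 := by
      intro h
      apply huy
      have hyx : x ^ 2 * x = x * x ^ 2 := hsy x hx
      have h1 : u⁻¹ = x ^ 2 :=
        mul_right_cancel (show u⁻¹ * x = x ^ 2 * x by rw [hyx]; exact h)
      calc u = (u⁻¹)⁻¹ := (inv_inv u).symm
        _ = (x ^ 2)⁻¹ := by rw [h1]
        _ = x ^ 2 := inv_eq_of_mul_eq_one_right hyy
    have hv : φ (u⁻¹ * x) = u⁻¹ * x := by
      rw [hφdef]; exact Equiv.swap_apply_of_ne_of_ne hv1 hv2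
    have hux' : x = u * (u⁻¹ * x) := by simp [mul_assoc]
    have hcontr : α x = x := by
      calc α x = α (u * (u⁻¹ * x)) := by rw [← hux']
        _ = α u * α (u⁻¹ * x) := by rw [map_mul]
        _ = φ u * φ (u⁻¹ * x) := by rw [hα, hα]
        _ = u * (u⁻¹ * x) := by rw [hu, hv]
        _ = x := hux'.symm
    have hφx : φ x = x * x ^ 2 := by rw [hφdef]; exact Equiv.swap_apply_left x _
    apply hx2
    have hxx : x * x ^ 2 = x := by rw [← hφx, hα, hcontr]
    exact mul_left_cancel (show x * x ^ 2 = x * 1 by rw [mul_one]; exact hxx)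
  -- degenerate case : A = {1, x^2}, so G ≅ ℤ₄
  · push_neg at hU
    apply hnot4
    have hcyc : ∀ g : G, g ∈ Subgroup.zpowers x := by
      intro g
      by_cases hg : g ∈ A
      · by_cases hg1 : g = 1
        · rw [hg1]; exact one_mem _
        · rw [hU g hg hg1]
          exact pow_mem (Subgroup.mem_zpowers x) 2
      · have ha := hmem g hg
        by_cases ha1 : x⁻¹ * g = 1
        · obtain rfl := inv_mul_eq_one.mp ha1
          exact Subgroup.mem_zpowers x
        · have h2 := hU _ ha ha1
          have hg3 : g = x * x ^ 2 := by
            rw [← h2]; simp [mul_assoc]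
          rw [hg3]
          exact mul_mem (Subgroup.mem_zpowers x) (pow_mem (Subgroup.mem_zpowers x) 2)
    have hIsCyc : IsCyclic G := ⟨⟨x, hcyc⟩⟩
    haveI : Fact (Nat.Prime 2) := ⟨by norm_num⟩
    have hord : orderOf x = 4 := by
      have h4 : x ^ (2 : ℕ) ^ 2 = 1 := by
        have h24 : ((2 : ℕ) ^ 2) = 2 + 2 := by norm_num
        rw [h24, pow_add]
        exact hyy
      have := orderOf_eq_prime_pow (x := x) (p := 2) (n := 1) (by simpa using hx2) h4
      simpa using this
    have hcard : Nat.card G = 4 := by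
      rw [← orderOf_eq_card_of_forall_mem_zpowers hcyc]
      exact hord
    have e : Multiplicative (ZMod (Nat.card G)) ≃* G := zmodCyclicMulEquiv hIsCyc
    rw [hcard] at e
    exact ⟨e.symm⟩
end

section
/- Every semidihedral group SemiD_{16n} = ⟨a, x | a^{8n} = x² = e, xa = a^{4n−1}x⟩ (n ≥ 1) is not CCA. -/
/-- Every semidihedral group `SemiD_{16n} = ⟨a, x | a^{8n} = x² = e, xa = a^{4n−1}x⟩`
(`n ≥ 1`) is not CCA. -/
theorem stmt_15 {G : Type*} [Group G] [Finite G] (n : ℕ) (hn : 1 ≤ n) (a x : G)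
    (hcard : Nat.card G = 16 * n) (haord : orderOf a = 8 * n)
    (hx : x ^ 2 = 1) (hx1 : x ≠ 1) (hrel : x * a = a ^ (4 * n - 1) * x)
    (hgen : Subgroup.closure {a, x} = ⊤) :
    ¬ IsCCA G := by
  classical
  intro hCCA
  -- basic arithmetic names
  obtain ⟨m, hm⟩ : ∃ m, 4 * n - 1 = m := ⟨_, rfl⟩
  rw [hm] at hrel
  have hm1 : m + 1 = 4 * n := by omega
  have ha8 : a ^ (8 * n) = 1 := by rw [← haord]; exact pow_orderOf_eq_one a
  have hane : ∀ k : ℕ, 0 < k → k < 8 * n → a ^ k ≠ 1 := by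
    intro k hk1 hk2 h
    have h2 := orderOf_dvd_of_pow_eq_one h
    rw [haord] at h2
    have := Nat.le_of_dvd hk1 h2
    omega
  have hxx : x * x = 1 := by rw [← sq]; exact hx
  have hxinv : x⁻¹ = x := inv_eq_of_mul_eq_one_right hxx
  set z : G := a ^ (4 * n) with hzdef
  have hz2 : z * z = 1 := by
    rw [hzdef, ← pow_add, show 4 * n + 4 * n = 8 * n by omega, ha8]
  set t : G := a * x with htdef
  have ht2 : t * t = z := by
    calc t * t = a * (x * a) * x := by rw [htdef]; rw [mul_assoc, mul_assoc, mul_assoc]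
    _ = a ^ (m + 1) * (x * x) := by
        rw [hrel, pow_succ']; simp only [mul_assoc]
    _ = z := by rw [hxx, hm1, mul_one]
  -- commutation of x with powers of a
  have hxa : ∀ k : ℕ, x * a ^ k = a ^ (k * m) * x := by
    intro k
    induction k with
    | zero => simp
    | succ k ih =>
      rw [pow_succ, ← mul_assoc, ih, mul_assoc, hrel, ← mul_assoc, ← pow_add]
      congr 2
      ring
  have hxz : x * z = z * x := by
    obtain ⟨q, hq⟩ : ∃ q, 2 * n - 1 = q := ⟨_, rfl⟩
    have hq1 : q + 1 = 2 * n := by omega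
    have key : 4 * n * m = 8 * n * q + 4 * n := by
      have hm' : (m : ℤ) + 1 = 4 * n := by exact_mod_cast hm1
      have hq' : (q : ℤ) + 1 = 2 * n := by exact_mod_cast hq1
      have : (4 * n * m : ℤ) = 8 * n * q + 4 * n := by
        linear_combination (4 * (n : ℤ)) * hm' - 8 * (n : ℤ) * hq'
      exact_mod_cast this
    rw [hzdef, hxa, key, pow_add, pow_mul, ha8, one_pow, one_mul]
  have hza : z * a = a * z := by
    rw [hzdef, ← pow_succ, ← pow_succ']
  have htinv : t⁻¹ = t * z := by
    refine inv_eq_of_mul_eq_one_right ?_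
    rw [← mul_assoc, ht2, hz2]
  have hzt : z * t = t * z := by
    rw [← ht2, mul_assoc, ← mul_assoc]
  have hztinv : z * t⁻¹ = t := by
    rw [htinv, ← hzt, ← mul_assoc, hz2, one_mul]
  have htinvz : t⁻¹ * z = t := by rw [htinv, mul_assoc, hz2, mul_one]
  have hzt' : z * t = t⁻¹ := by rw [hzt, ← htinv]
  -- the set H and the candidate colour-preserving map f
  set H : Set G := {1, x, z, z * x} with hHdef
  have memH : ∀ g : G, g ∈ H ↔ g = 1 ∨ g = x ∨ g = z ∨ g = z * x := by
    intro g; simp [hHdef]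
  have hHx : ∀ g : G, g ∈ H → g * x ∈ H := by
    intro g hg
    rcases (memH g).1 hg with rfl | rfl | rfl | rfl <;> rw [memH]
    · right; left; rw [one_mul]
    · left; exact hxx
    · right; right; right; rfl
    · right; right; left; rw [mul_assoc, hxx, mul_one]
  have hHx' : ∀ g : G, g * x ∈ H → g ∈ H := by
    intro g hg
    have := hHx _ hg
    rwa [mul_assoc, hxx, mul_one] at this
  have hHz : ∀ g : G, g ∈ H → g * z ∈ H := by
    intro g hg
    rcases (memH g).1 hg with rfl | rfl | rfl | rfl <;> rw [memH]
    · right; right; left; rw [one_mul]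
    · right; right; right; rw [hxz]
    · left; exact hz2
    · right; left; rw [mul_assoc, hxz, ← mul_assoc, hz2, one_mul]
  have hHz' : ∀ g : G, g * z ∈ H → g ∈ H := by
    intro g hg
    have := hHz _ hg
    rwa [mul_assoc, hz2, mul_one] at this
  set f : G → G := fun g => if g ∈ H then g else g * z with hfdef
  have hf_mem : ∀ g : G, g ∈ H → f g = g := by intro g hg; simp [hfdef, hg]
  have hf_nmem : ∀ g : G, g ∉ H → f g = g * z := by intro g hg; simp [hfdef, hg]
  have hfinv : Function.Involutive f := by
    intro g
    by_cases hg : g ∈ H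
    · rw [hf_mem g hg, hf_mem g hg]
    · have hgz : g * z ∉ H := fun h => hg (hHz' g h)
      rw [hf_nmem g hg, hf_nmem _ hgz, mul_assoc, hz2, mul_one]
  -- f is colour preserving for S = {x, t, t⁻¹}
  have hcp : ColourPreserving ({x, t, t⁻¹} : Set G) f := by
    intro g s hs
    rcases hs with h | h | h <;> rw [h]
    · -- s = x
      left
      by_cases hg : g ∈ H
      · rw [hf_mem g hg, hf_mem _ (hHx g hg)]
      · have hgx : g * x ∉ H := fun h => hg (hHx' g h)
        rw [hf_nmem g hg, hf_nmem _ hgx, mul_assoc, mul_assoc, hxz]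
    · -- s = t
      by_cases hg : g ∈ H <;> by_cases hgt : g * t ∈ H
      · left; rw [hf_mem g hg, hf_mem _ hgt]
      · right; rw [hf_mem g hg, hf_nmem _ hgt, htinv, mul_assoc]
      · right; rw [hf_mem _ hgt, hf_nmem g hg, mul_assoc, hztinv]
      · left; rw [hf_nmem g hg, hf_nmem _ hgt, mul_assoc g t z, mul_assoc g z t, hzt]
    · -- s = t⁻¹
      simp only [Set.mem_singleton_iff] at *
      by_cases hg : g ∈ H <;> by_cases hgt : g * t⁻¹ ∈ H
      · left; rw [hf_mem g hg, hf_mem _ hgt]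
      · right; rw [hf_mem g hg, hf_nmem _ hgt, inv_inv, mul_assoc, htinvz]
      · right; rw [hf_mem _ hgt, hf_nmem g hg, inv_inv, mul_assoc, hzt']
      · left; rw [hf_nmem g hg, hf_nmem _ hgt, mul_assoc, mul_assoc, htinvz, hztinv]
  -- symmetry of S
  have hSsym : ({x, t, t⁻¹} : Set G)⁻¹ = {x, t, t⁻¹} := by
    ext g
    simp only [Set.mem_inv, Set.mem_insert_iff, Set.mem_singleton_iff,
      inv_eq_iff_eq_inv, hxinv, inv_inv]
    tauto
  -- S generates G
  have hSgen : Subgroup.closure ({x, t, t⁻¹} : Set G) = ⊤ := by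
    rw [← top_le_iff, ← hgen, Subgroup.closure_le]
    rintro g (h | h) <;> rw [h]
    · have ht : t ∈ Subgroup.closure ({x, t, t⁻¹} : Set G) :=
        Subgroup.subset_closure (by simp)
      have hxm : x ∈ Subgroup.closure ({x, t, t⁻¹} : Set G) :=
        Subgroup.subset_closure (by simp)
      have hprod := mul_mem ht hxm
      rw [htdef, mul_assoc, hxx, mul_one] at hprod
      exact hprod
    · exact Subgroup.subset_closure (by simp)
  -- x is not a power of a
  have hxZ : x ∉ Subgroup.zpowers a := by
    intro hmem
    have hle : Subgroup.closure ({a, x} : Set G) ≤ Subgroup.zpowers a := by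
      rw [Subgroup.closure_le]
      rintro g (h | h) <;> rw [h]
      · exact Subgroup.mem_zpowers a
      · exact hmem
    rw [hgen, top_le_iff] at hle
    have hc : Nat.card (Subgroup.zpowers a) = Nat.card G := by
      rw [hle]
      exact Subgroup.card_top
    rw [Nat.card_zpowers, haord, hcard] at hc
    omega
  -- a ∉ H and a * a ∉ H
  have haH : a ∉ H := by
    rw [memH]
    push_neg
    refine ⟨?_, ?_, ?_, ?_⟩
    · intro h; exact hane 1 (by omega) (by omega) (by rw [pow_one, h])
    · intro h; exact hxZ (h ▸ Subgroup.mem_zpowers a)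
    · intro h
      have : a ^ m * a = a ^ (4 * n) := by rw [← pow_succ, hm1]
      rw [hzdef] at h
      rw [← h, mul_eq_right] at this  -- ?
      exact hane m (by omega) (by omega) this
    · intro h
      have : x = z⁻¹ * a := by rw [h]; group
      apply hxZ
      rw [this, hzdef]
      exact mul_mem (inv_mem (pow_mem (Subgroup.mem_zpowers a) _)) (Subgroup.mem_zpowers a)
  have haaH : a * a ∉ H := by
    rw [memH]
    push_neg
    refine ⟨?_, ?_, ?_, ?_⟩
    · intro h
      exact hane 2 (by omega) (by omega) (by rw [sq]; exact h)
    · intro h; apply hxZ; rw [← h, ← sq]; exact pow_mem (Subgroup.mem_zpowers a) 2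
    · intro h
      obtain ⟨r, hr⟩ : ∃ r, 4 * n - 2 = r := ⟨_, rfl⟩
      have hr1 : r + 2 = 4 * n := by omega
      have h2 : a ^ r * (a * a) = a ^ (4 * n) := by
        rw [← sq, ← pow_add, hr1]
      rw [hzdef] at h
      rw [← h, mul_eq_right] at h2
      exact hane r (by omega) (by omega) h2
    · intro h
      have : x = z⁻¹ * (a * a) := by rw [h]; group
      apply hxZ
      rw [this, hzdef]
      exact mul_mem (inv_mem (pow_mem (Subgroup.mem_zpowers a) _))
        (mul_mem (Subgroup.mem_zpowers a) (Subgroup.mem_zpowers a))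
  -- apply CCA to get affineness, derive contradiction
  have haff : IsAffineMap f := by
    have := hCCA ({x, t, t⁻¹} : Set G) hSsym hSgen (hfinv.toPerm f) ?_
    · rwa [Function.Involutive.coe_toPerm] at this
    · rwa [Function.Involutive.coe_toPerm]
  obtain ⟨α, g₀, hα⟩ := haff
  have h1H : (1 : G) ∈ H := by rw [memH]; left; rfl
  have hg₀ : g₀ = 1 := by
    have h1 : f 1 = 1 := hf_mem 1 h1H
    rw [hα 1, mul_one] at h1
    have := α.injective (h1.trans (map_one α).symm)
    exact this
  have hhom : ∀ y : G, f y = α y := by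
    intro y; rw [hα y, hg₀, one_mul]
  have hmul : f (a * a) = f a * f a := by
    simp only [hhom]; exact map_mul α a a
  rw [hf_nmem _ haaH, hf_nmem _ haH] at hmul
  have hrhs : (a * z) * (a * z) = a * a := by
    rw [mul_assoc a z (a * z), ← mul_assoc z a z, hza, mul_assoc a z z, hz2, mul_one]
  have hkey : (a * a) * z = (a * a) * 1 := by
    rw [mul_one]
    exact hmul.trans hrhs
  have hz1 : z = 1 := mul_left_cancel hkey
  rw [hzdef] at hz1
  exact hane (4 * n) (by omega) (by omega) hz1
end
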